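/- arXiv:1810.09009 — 4 statements merged into one kernel-verified Lean document; each statement's English description precedes it below -/
import Mathlib

section
/- Assume V ∈ Γ(ℝᵐ) is sublinear (i.e., proper lsc convex and positively homogeneous). Then the restriction of D to the convex set S_col⁻ is a convex function; moreover, D is differentiable at every σ ∈ S₀ ∩ int(dom V*) with ∇D(σ) = q(x(σ)). -/
open Matrix Set

noncomputable section

/-- The quadratic function `x ↦ ½⟨x, A x⟩ − ⟨b, x⟩ + c`. -/
def qf {n : ℕ} (A : Matrix (Fin n) (Fin n) ℝ) (b : Fin n → ℝ) (c : ℝ) (x : Fin n → ℝ) : ℝ :=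
  (1 / 2 : ℝ) * (x ⬝ᵥ A.mulVec x) - b ⬝ᵥ x + c

/-- `A(σ) = A₀ + Σ σ_k A_k`. -/
def Amat {n m : ℕ} (A0 : Matrix (Fin n) (Fin n) ℝ) (A : Fin m → Matrix (Fin n) (Fin n) ℝ)
    (σ : Fin m → ℝ) : Matrix (Fin n) (Fin n) ℝ :=
  A0 + ∑ k, σ k • A k

/-- `b(σ) = b₀ + Σ σ_k b_k`. -/
def bvec {n m : ℕ} (b0 : Fin n → ℝ) (b : Fin m → Fin n → ℝ) (σ : Fin m → ℝ) : Fin n → ℝ :=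
  b0 + ∑ k, σ k • b k

/-- `q(x) = (q₁(x), …, q_m(x))`. -/
def qvec {n m : ℕ} (A : Fin m → Matrix (Fin n) (Fin n) ℝ) (b : Fin m → Fin n → ℝ)
    (c : Fin m → ℝ) (x : Fin n → ℝ) : Fin m → ℝ :=
  fun i => qf (A i) (b i) (c i) x

/-- Subdifferential of an (extended-real-valued) convex function represented by its
finite part `V` and its effective domain `dV`; it is empty outside `dV`. -/
def subdiff {m : ℕ} (V : (Fin m → ℝ) → ℝ) (dV : Set (Fin m → ℝ)) (y : Fin m → ℝ) :
    Set (Fin m → ℝ) :=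
  {σ | y ∈ dV ∧ ∀ y' ∈ dV, (y' - y) ⬝ᵥ σ ≤ V y' - V y}

/-- `V ∈ Γ(ℝᵐ)`: proper, convex and lower semicontinuous (closed epigraph), where the
extended-real-valued function is represented by its finite part `V` on its domain `dV`. -/
def properLscConvex {m : ℕ} (V : (Fin m → ℝ) → ℝ) (dV : Set (Fin m → ℝ)) : Prop :=
  dV.Nonempty ∧ ConvexOn ℝ dV V ∧
    IsClosed {p : (Fin m → ℝ) × ℝ | p.1 ∈ dV ∧ V p.1 ≤ p.2}

/-- `(Vs, dVs)` is the Fenchel conjugate of `(V, dV)`: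
`dVs` is the set where the supremum is finite and `Vs` its value there. -/
def isConjugate {m : ℕ} (V : (Fin m → ℝ) → ℝ) (dV : Set (Fin m → ℝ))
    (Vs : (Fin m → ℝ) → ℝ) (dVs : Set (Fin m → ℝ)) : Prop :=
  dVs = {σ | BddAbove ((fun y => y ⬝ᵥ σ - V y) '' dV)} ∧
    ∀ σ ∈ dVs, Vs σ = sSup ((fun y => y ⬝ᵥ σ - V y) '' dV)

/-- The continuous linear functional `v ↦ ⟨g, v⟩`. -/
def dotCLM {k : ℕ} (g : Fin k → ℝ) : (Fin k → ℝ) →L[ℝ] ℝ :=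
  LinearMap.toContinuousLinearMap
    { toFun := fun v => g ⬝ᵥ v
      map_add' := fun u v => by simp [dotProduct_add]
      map_smul' := fun t v => by simp [dotProduct_smul, smul_eq_mul] }

/-- The continuous linear map `v ↦ M v`. -/
def matCLM {k l : ℕ} (M : Matrix (Fin l) (Fin k) ℝ) : (Fin k → ℝ) →L[ℝ] (Fin l → ℝ) :=
  LinearMap.toContinuousLinearMap M.mulVecLin

/-! ### Auxiliary lemmas -/

namespace Statement1Aux

variable {n m : ℕ}

lemma dotCLM_apply {k : ℕ} (g v : Fin k → ℝ) : dotCLM g v = g ⬝ᵥ v := rfl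

lemma sum_smul_mulVec (s : Finset (Fin m)) (A : Fin m → Matrix (Fin n) (Fin n) ℝ)
    (σ : Fin m → ℝ) (x : Fin n → ℝ) :
    (∑ k ∈ s, σ k • A k) *ᵥ x = ∑ k ∈ s, σ k • (A k *ᵥ x) := by
  induction s using Finset.induction with
  | empty => simp [Matrix.zero_mulVec]
  | insert _ _ h ih => simp [Finset.sum_insert h, Matrix.add_mulVec, ih, Matrix.smul_mulVec]

lemma dotProduct_finsum {k : ℕ} (s : Finset (Fin m)) (x : Fin k → ℝ) (v : Fin m → Fin k → ℝ) :
    x ⬝ᵥ (∑ j ∈ s, v j) = ∑ j ∈ s, x ⬝ᵥ v j := by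
  induction s using Finset.induction with
  | empty => simp
  | insert _ _ h ih => simp [Finset.sum_insert h, dotProduct_add, ih]

lemma finsum_dotProduct {k : ℕ} (s : Finset (Fin m)) (x : Fin k → ℝ) (v : Fin m → Fin k → ℝ) :
    (∑ j ∈ s, v j) ⬝ᵥ x = ∑ j ∈ s, v j ⬝ᵥ x := by
  induction s using Finset.induction with
  | empty => simp
  | insert _ _ h ih => simp [Finset.sum_insert h, add_dotProduct, ih]

lemma qf_decomp (A0 : Matrix (Fin n) (Fin n) ℝ) (A : Fin m → Matrix (Fin n) (Fin n) ℝ)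
    (b0 : Fin n → ℝ) (b : Fin m → Fin n → ℝ) (c : Fin m → ℝ) (σ : Fin m → ℝ) (x : Fin n → ℝ) :
    qf (Amat A0 A σ) (bvec b0 b σ) (c ⬝ᵥ σ) x = qf A0 b0 0 x + qvec A b c x ⬝ᵥ σ := by
  have h1 : x ⬝ᵥ (Amat A0 A σ) *ᵥ x = x ⬝ᵥ A0 *ᵥ x + ∑ k, σ k * (x ⬝ᵥ A k *ᵥ x) := by
    simp [Amat, Matrix.add_mulVec, sum_smul_mulVec, dotProduct_add, dotProduct_finsum,
      dotProduct_smul, smul_eq_mul]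
  have h2 : bvec b0 b σ ⬝ᵥ x = b0 ⬝ᵥ x + ∑ k, σ k * (b k ⬝ᵥ x) := by
    simp [bvec, add_dotProduct, finsum_dotProduct, smul_dotProduct, smul_eq_mul]
  have h3 : qvec A b c x ⬝ᵥ σ
      = ∑ k, ((1/2 : ℝ) * (x ⬝ᵥ A k *ᵥ x) - b k ⬝ᵥ x + c k) * σ k := rfl
  have h4 : c ⬝ᵥ σ = ∑ k, c k * σ k := rfl
  have h5 : ∀ k : Fin m, ((1/2 : ℝ) * (x ⬝ᵥ A k *ᵥ x) - b k ⬝ᵥ x + c k) * σ k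
      = (1/2 : ℝ) * (σ k * (x ⬝ᵥ A k *ᵥ x)) - σ k * (b k ⬝ᵥ x) + c k * σ k := by
    intro k; ring
  simp only [qf, h1, h2, h3, h4, h5]
  rw [Finset.sum_add_distrib, Finset.sum_sub_distrib, ← Finset.mul_sum]
  ring

lemma dot_symm (M : Matrix (Fin n) (Fin n) ℝ) (hM : M.IsSymm) (x y : Fin n → ℝ) :
    x ⬝ᵥ M *ᵥ y = y ⬝ᵥ M *ᵥ x := by
  rw [Matrix.dotProduct_mulVec, ← Matrix.mulVec_transpose, hM.eq, dotProduct_comm]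

lemma qf_sub_solution (A : Matrix (Fin n) (Fin n) ℝ) (hM : A.IsSymm) (bb : Fin n → ℝ) (c : ℝ)
    (x y : Fin n → ℝ) (hy : A *ᵥ y = bb) :
    qf A bb c y - qf A bb c x = -((1/2 : ℝ) * ((y - x) ⬝ᵥ A *ᵥ (y - x))) := by
  have h1 : (y - x) ⬝ᵥ A *ᵥ (y - x)
      = y ⬝ᵥ A *ᵥ y - 2 * (x ⬝ᵥ A *ᵥ y) + x ⬝ᵥ A *ᵥ x := by
    rw [Matrix.mulVec_sub, sub_dotProduct, dotProduct_sub, dotProduct_sub, dot_symm A hM y x]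
    ring
  have h2 : y ⬝ᵥ A *ᵥ y = bb ⬝ᵥ y := by rw [hy, dotProduct_comm]
  have h3 : x ⬝ᵥ A *ᵥ y = bb ⬝ᵥ x := by rw [hy, dotProduct_comm]
  simp only [qf, h1, h2, h3]
  ring

/-- Fredholm alternative for real symmetric matrices. -/
lemma mem_range_symm_iff (M : Matrix (Fin n) (Fin n) ℝ) (hM : M.IsSymm) (v : Fin n → ℝ) :
    v ∈ Set.range M.mulVec ↔ ∀ u, M *ᵥ u = 0 → v ⬝ᵥ u = 0 := by
  set T : EuclideanSpace ℝ (Fin n) →ₗ[ℝ] EuclideanSpace ℝ (Fin n) := Matrix.toEuclideanLin M with hT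
  have hTapp : ∀ x : EuclideanSpace ℝ (Fin n), T x = M *ᵥ x := fun x => rfl
  have hrange : LinearMap.range T = (LinearMap.ker T)ᗮ := by
    have hle : LinearMap.range T ≤ (LinearMap.ker T)ᗮ := by
      rintro _ ⟨x, rfl⟩
      intro u hu
      have h0 : (M *ᵥ (u : Fin n → ℝ)) = 0 := by
        rw [← hTapp]; exact congrArg WithLp.ofLp (LinearMap.mem_ker.mp hu)
      calc inner ℝ u (T x) = (u : Fin n → ℝ) ⬝ᵥ M *ᵥ x := by
            simp [hTapp, PiLp.inner_apply, dotProduct, RCLike.inner_apply, mul_comm]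
        _ = (x : Fin n → ℝ) ⬝ᵥ M *ᵥ u := dot_symm M hM u x
        _ = 0 := by rw [h0]; simp
    have h1 : Module.finrank ℝ (LinearMap.range T) + Module.finrank ℝ (LinearMap.ker T)
        = n := by
      rw [LinearMap.finrank_range_add_finrank_ker]
      simp [finrank_euclideanSpace_fin]
    have h2 : Module.finrank ℝ (LinearMap.ker T)
        + Module.finrank ℝ (LinearMap.ker T)ᗮ = n := by
      rw [Submodule.finrank_add_finrank_orthogonal]
      simp [finrank_euclideanSpace_fin]
    exact Submodule.eq_of_le_of_finrank_eq hle (by omega)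
  constructor
  · rintro ⟨x, rfl⟩ u hu
    have := dot_symm M hM u x
    rw [dotProduct_comm (M *ᵥ x) u, this, hu]
    simp
  · intro h
    have hv : (WithLp.toLp 2 v : EuclideanSpace ℝ (Fin n)) ∈ (LinearMap.ker T)ᗮ := by
      intro u hu
      have h0 : M *ᵥ (u : Fin n → ℝ) = 0 := by
        rw [← hTapp]; exact congrArg WithLp.ofLp (LinearMap.mem_ker.mp hu)
      have heq : inner ℝ u (WithLp.toLp 2 v : EuclideanSpace ℝ (Fin n)) = (v : Fin n → ℝ) ⬝ᵥ (u : Fin n → ℝ) := by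
        simp [PiLp.inner_apply, dotProduct, RCLike.inner_apply, mul_comm]
      rw [heq, h u h0]
    rw [← hrange] at hv
    obtain ⟨x, hx⟩ := hv
    exact ⟨x, congrArg WithLp.ofLp hx⟩

lemma isSymm_Amat (A0 : Matrix (Fin n) (Fin n) ℝ) (A : Fin m → Matrix (Fin n) (Fin n) ℝ)
    (hA0 : A0.IsSymm) (hA : ∀ i, (A i).IsSymm) (σ : Fin m → ℝ) : (Amat A0 A σ).IsSymm := by
  unfold Matrix.IsSymm Amat
  rw [Matrix.transpose_add, Matrix.transpose_sum, hA0.eq]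
  congr 1
  exact Finset.sum_congr rfl fun k _ => by rw [Matrix.transpose_smul, (hA k).eq]

lemma posSemidef_of_isSymm_nonneg {M : Matrix (Fin n) (Fin n) ℝ} (h1 : M.IsSymm)
    (h2 : ∀ x : Fin n → ℝ, 0 ≤ x ⬝ᵥ M *ᵥ x) : M.PosSemidef := by
  refine Matrix.PosSemidef.of_dotProduct_mulVec_nonneg ?_ fun x => by simpa [star_trivial] using h2 x
  rw [Matrix.IsHermitian, Matrix.conjTranspose_eq_transpose_of_trivial, h1.eq]

lemma posSemidef_smul {M : Matrix (Fin n) (Fin n) ℝ} {a : ℝ} (hM : M.PosSemidef) (ha : 0 ≤ a) :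
    (a • M).PosSemidef := by
  refine Matrix.PosSemidef.of_dotProduct_mulVec_nonneg ?_ fun x => ?_
  · rw [Matrix.IsHermitian, Matrix.conjTranspose_smul]
    rw [hM.1.eq]
    simp [star_trivial]
  · rw [Matrix.smul_mulVec, dotProduct_smul]
    exact smul_nonneg ha (hM.dotProduct_mulVec_nonneg x)

lemma posSemidef_add {M N : Matrix (Fin n) (Fin n) ℝ} (hM : M.PosSemidef) (hN : N.PosSemidef) :
    (M + N).PosSemidef :=
  Matrix.PosSemidef.of_dotProduct_mulVec_nonneg (hM.1.add hN.1) fun x => by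
    rw [Matrix.add_mulVec, dotProduct_add]
    exact add_nonneg (hM.dotProduct_mulVec_nonneg x) (hN.dotProduct_mulVec_nonneg x)

lemma Amat_combo (A0 : Matrix (Fin n) (Fin n) ℝ) (A : Fin m → Matrix (Fin n) (Fin n) ℝ)
    {a bb : ℝ} (hab : a + bb = 1) (σ τ : Fin m → ℝ) :
    Amat A0 A (a • σ + bb • τ) = a • Amat A0 A σ + bb • Amat A0 A τ := by
  ext i j
  simp only [Amat, Matrix.add_apply, Matrix.smul_apply, Matrix.sum_apply, Pi.add_apply,
    Pi.smul_apply, smul_eq_mul, add_mul, Finset.sum_add_distrib, mul_add, Finset.mul_sum,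
    mul_assoc]
  linear_combination A0 i j * hab.symm

lemma bvec_combo (b0 : Fin n → ℝ) (b : Fin m → Fin n → ℝ)
    {a bb : ℝ} (hab : a + bb = 1) (σ τ : Fin m → ℝ) :
    bvec b0 b (a • σ + bb • τ) = a • bvec b0 b σ + bb • bvec b0 b τ := by
  funext i
  simp only [bvec, Pi.add_apply, Pi.smul_apply, Finset.sum_apply, smul_eq_mul, add_mul,
    Finset.sum_add_distrib, mul_add, Finset.mul_sum, mul_assoc]
  linear_combination b0 i * hab.symm

lemma abs_dot_le {k : ℕ} (u v : Fin k → ℝ) : |u ⬝ᵥ v| ≤ (k : ℝ) * (‖u‖ * ‖v‖) := by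
  rw [dotProduct]
  calc |∑ i, u i * v i| ≤ ∑ i, |u i * v i| := Finset.abs_sum_le_sum_abs _ _
    _ ≤ ∑ _i : Fin k, ‖u‖ * ‖v‖ := by
        refine Finset.sum_le_sum fun i _ => ?_
        rw [abs_mul]
        have h1 : |u i| ≤ ‖u‖ := by rw [← Real.norm_eq_abs]; exact norm_le_pi_norm u i
        have h2 : |v i| ≤ ‖v‖ := by rw [← Real.norm_eq_abs]; exact norm_le_pi_norm v i
        exact mul_le_mul h1 h2 (abs_nonneg _) (norm_nonneg _)
    _ = (k : ℝ) * (‖u‖ * ‖v‖) := by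
        simp [Finset.sum_const, Finset.card_univ, nsmul_eq_mul]

end Statement1Aux
set_option maxHeartbeats 1000000 in
/-- If `V ∈ Γ(ℝᵐ)` is sublinear (proper lsc convex and positively
homogeneous), then `D` restricted to `S_col⁻` is convex, and `D` is differentiable at every
`σ ∈ S₀ ∩ int(dom V*)` with `∇D(σ) = q(x(σ))`. -/
theorem statement1 {n m : ℕ}
    (A0 : Matrix (Fin n) (Fin n) ℝ) (A : Fin m → Matrix (Fin n) (Fin n) ℝ)
    (b0 : Fin n → ℝ) (b : Fin m → Fin n → ℝ) (c : Fin m → ℝ)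
    (hA0 : A0.IsSymm) (hA : ∀ i, (A i).IsSymm)
    (V Vs : (Fin m → ℝ) → ℝ) (dV dVs : Set (Fin m → ℝ))
    (hV : properLscConvex V dV) (hconj : isConjugate V dV Vs dVs)
    (hsublin : ∀ t : ℝ, 0 < t → ∀ y ∈ dV, t • y ∈ dV ∧ V (t • y) = t * V y)
    (D : (Fin m → ℝ) → ℝ)
    (hD : ∀ σ ∈ dVs, bvec b0 b σ ∈ Set.range (Amat A0 A σ).mulVec →
      ∀ x, Amat A0 A σ *ᵥ x = bvec b0 b σ →
        D σ = qf A0 b0 0 x + qvec A b c x ⬝ᵥ σ - Vs σ) :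
    ConvexOn ℝ {σ | σ ∈ dVs ∧ bvec b0 b σ ∈ Set.range (Amat A0 A σ).mulVec ∧
        (-(Amat A0 A σ)).PosSemidef} D ∧
    ∀ σ ∈ interior dVs, IsUnit (Amat A0 A σ).det →
      HasFDerivAt D (dotCLM (qvec A b c ((Amat A0 A σ)⁻¹ *ᵥ bvec b0 b σ))) σ := by
  classical
  open Statement1Aux in
  obtain ⟨hdVs_eq, hVs_eq⟩ := hconj
  obtain ⟨⟨y0, hy0⟩, hconv, hclosed⟩ := hV
  -- `0 ∈ dV` and `V 0 = 0`
  have h0 : (0 : Fin m → ℝ) ∈ dV ∧ V 0 ≤ 0 := by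
    have hev : ∀ k : ℕ, ((((k : ℝ) + 1)⁻¹ • y0, ((k : ℝ) + 1)⁻¹ * V y0) ∈
        {p : (Fin m → ℝ) × ℝ | p.1 ∈ dV ∧ V p.1 ≤ p.2}) := by
      intro k
      obtain ⟨hm1, he1⟩ := hsublin (((k : ℝ) + 1)⁻¹) (by positivity) y0 hy0
      exact ⟨hm1, le_of_eq he1⟩
    have h1 : Filter.Tendsto (fun k : ℕ => ((k : ℝ) + 1)⁻¹) Filter.atTop (nhds 0) := by
      simpa [one_div] using tendsto_one_div_add_atTop_nhds_zero_nat (𝕜 := ℝ)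
    have hlim : Filter.Tendsto (fun k : ℕ => (((k : ℝ) + 1)⁻¹ • y0, ((k : ℝ) + 1)⁻¹ * V y0))
        Filter.atTop (nhds ((0 : Fin m → ℝ), (0 : ℝ))) := by
      have hl1 : Filter.Tendsto (fun k : ℕ => ((k : ℝ) + 1)⁻¹ • y0) Filter.atTop
          (nhds (0 : Fin m → ℝ)) := by
        simpa using h1.smul_const y0
      have hl2 : Filter.Tendsto (fun k : ℕ => ((k : ℝ) + 1)⁻¹ * V y0) Filter.atTop
          (nhds (0 : ℝ)) := by
        simpa using h1.mul_const (V y0)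
      exact hl1.prodMk_nhds hl2
    exact hclosed.mem_of_tendsto hlim (Filter.Eventually.of_forall hev)
  have h0dV : (0 : Fin m → ℝ) ∈ dV := h0.1
  have hV0 : V 0 = 0 := by
    have h2 := (hsublin 2 (by norm_num) 0 h0dV).2
    rw [smul_zero] at h2
    linarith [h0.2]
  -- characterization of `dVs`
  have hchar : ∀ σ, σ ∈ dVs ↔ ∀ y ∈ dV, y ⬝ᵥ σ ≤ V y := by
    intro σ
    rw [hdVs_eq]; simp only [Set.mem_setOf_eq]
    constructor
    · rintro ⟨Mb, hMb⟩ y hy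
      by_contra hlt
      push_neg at hlt
      have hMb0 : (0 : ℝ) ≤ Mb := hMb ⟨0, h0dV, by simp [hV0]⟩
      have hεpos : 0 < y ⬝ᵥ σ - V y := by linarith
      set t : ℝ := (Mb + 1) / (y ⬝ᵥ σ - V y) with ht
      have htpos : 0 < t := by positivity
      obtain ⟨hmemt, heqt⟩ := hsublin t htpos y hy
      have hle : (t • y) ⬝ᵥ σ - V (t • y) ≤ Mb := hMb ⟨t • y, hmemt, rfl⟩
      rw [heqt, smul_dotProduct] at hle
      have hteq : t * (y ⬝ᵥ σ - V y) = Mb + 1 := by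
        rw [ht]; field_simp
      simp only [smul_eq_mul] at hle
      nlinarith
    · intro h
      refine ⟨0, ?_⟩
      rintro z ⟨y, hy, rfl⟩
      simp only
      linarith [h y hy]
  have hVs0 : ∀ σ ∈ dVs, Vs σ = 0 := by
    intro σ hσ
    rw [hVs_eq σ hσ]
    apply le_antisymm
    · refine csSup_le ⟨_, ⟨0, h0dV, rfl⟩⟩ ?_
      rintro z ⟨y, hy, rfl⟩
      have := (hchar σ).1 hσ y hy
      simp only
      linarith
    · have hb : BddAbove ((fun y => y ⬝ᵥ σ - V y) '' dV) := by rw [hdVs_eq] at hσ; exact hσ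
      exact le_csSup hb ⟨0, h0dV, by simp [hV0]⟩
  -- energy function
  set E : (Fin m → ℝ) → (Fin n → ℝ) → ℝ := fun σ x => qf A0 b0 0 x + qvec A b c x ⬝ᵥ σ with hE
  have hsymm : ∀ σ, (Amat A0 A σ).IsSymm := Statement1Aux.isSymm_Amat A0 A hA0 hA
  have hEq : ∀ σ x, E σ x = qf (Amat A0 A σ) (bvec b0 b σ) (c ⬝ᵥ σ) x := fun σ x =>
    (Statement1Aux.qf_decomp A0 A b0 b c σ x).symm
  have hDval : ∀ σ ∈ dVs, ∀ x, Amat A0 A σ *ᵥ x = bvec b0 b σ → D σ = E σ x := by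
    intro σ hσ x hx
    rw [hD σ hσ ⟨x, hx⟩ x hx, hVs0 σ hσ, hE]
    ring
  have hMax : ∀ σ, (-(Amat A0 A σ)).PosSemidef → ∀ xs, Amat A0 A σ *ᵥ xs = bvec b0 b σ →
      ∀ x, E σ x ≤ E σ xs := by
    intro σ hpsd xs hxs x
    rw [hEq σ x, hEq σ xs]
    have hdiff := Statement1Aux.qf_sub_solution (Amat A0 A σ) (hsymm σ) (bvec b0 b σ)
      (c ⬝ᵥ σ) x xs hxs
    have hq : 0 ≤ (xs - x) ⬝ᵥ (-(Amat A0 A σ)) *ᵥ (xs - x) := by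
      simpa [star_trivial] using hpsd.dotProduct_mulVec_nonneg (xs - x)
    rw [Matrix.neg_mulVec, dotProduct_neg] at hq
    linarith
  -- convexity of the feasible set
  have hSconv : Convex ℝ {σ | σ ∈ dVs ∧ bvec b0 b σ ∈ Set.range (Amat A0 A σ).mulVec ∧
      (-(Amat A0 A σ)).PosSemidef} := by
    rintro σ ⟨hσ1, hσ2, hσ3⟩ τ ⟨hτ1, hτ2, hτ3⟩ a bb ha hb hab
    rcases eq_or_lt_of_le ha with ha0 | hapos
    · have hbb : bb = 1 := by linarith
      simp only [← ha0, hbb, zero_smul, one_smul, zero_add, Set.mem_setOf_eq]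
      exact ⟨hτ1, hτ2, hτ3⟩
    rcases eq_or_lt_of_le hb with hb0 | hbpos
    · have haa : a = 1 := by linarith
      simp only [← hb0, haa, zero_smul, one_smul, add_zero, Set.mem_setOf_eq]
      exact ⟨hσ1, hσ2, hσ3⟩
    have hAc := Statement1Aux.Amat_combo A0 A hab σ τ
    have hbc := Statement1Aux.bvec_combo b0 b hab σ τ
    have hnegc : -(Amat A0 A (a • σ + bb • τ))
        = a • (-(Amat A0 A σ)) + bb • (-(Amat A0 A τ)) := by
      rw [hAc, neg_add, smul_neg, smul_neg]
    refine ⟨?_, ?_, ?_⟩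
    · rw [hchar]
      intro y hy
      have h1 := (hchar σ).1 hσ1 y hy
      have h2 := (hchar τ).1 hτ1 y hy
      rw [dotProduct_add, dotProduct_smul, dotProduct_smul, smul_eq_mul, smul_eq_mul]
      calc a * (y ⬝ᵥ σ) + bb * (y ⬝ᵥ τ) ≤ a * V y + bb * V y := by
            gcongr
        _ = V y := by rw [← add_mul, hab, one_mul]
    · rw [Statement1Aux.mem_range_symm_iff _ (hsymm _)]
      intro u hu
      have hmv : (-(Amat A0 A (a • σ + bb • τ))) *ᵥ u
          = a • ((-(Amat A0 A σ)) *ᵥ u) + bb • ((-(Amat A0 A τ)) *ᵥ u) := by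
        rw [hnegc, Matrix.add_mulVec, Matrix.smul_mulVec, Matrix.smul_mulVec]
      have hq0 : a * (u ⬝ᵥ (-(Amat A0 A σ)) *ᵥ u) + bb * (u ⬝ᵥ (-(Amat A0 A τ)) *ᵥ u) = 0 := by
        have : (-(Amat A0 A (a • σ + bb • τ))) *ᵥ u = 0 := by
          rw [Matrix.neg_mulVec, hu, neg_zero]
        rw [hmv] at this
        have := congrArg (fun w => u ⬝ᵥ w) this
        simpa [dotProduct_add, dotProduct_smul, smul_eq_mul] using this
      have h1 : 0 ≤ u ⬝ᵥ (-(Amat A0 A σ)) *ᵥ u := by simpa [star_trivial] using hσ3.dotProduct_mulVec_nonneg u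
      have h2 : 0 ≤ u ⬝ᵥ (-(Amat A0 A τ)) *ᵥ u := by simpa [star_trivial] using hτ3.dotProduct_mulVec_nonneg u
      have hz1 : u ⬝ᵥ (-(Amat A0 A σ)) *ᵥ u = 0 := by nlinarith
      have hz2 : u ⬝ᵥ (-(Amat A0 A τ)) *ᵥ u = 0 := by nlinarith
      have hk1 : Amat A0 A σ *ᵥ u = 0 := by
        have := (hσ3.dotProduct_mulVec_zero_iff u).1 (by simpa [star_trivial] using hz1)
        rw [Matrix.neg_mulVec, neg_eq_zero] at this
        exact this
      have hk2 : Amat A0 A τ *ᵥ u = 0 := by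
        have := (hτ3.dotProduct_mulVec_zero_iff u).1 (by simpa [star_trivial] using hz2)
        rw [Matrix.neg_mulVec, neg_eq_zero] at this
        exact this
      obtain ⟨xσ', hxσ'⟩ := hσ2
      obtain ⟨xτ', hxτ'⟩ := hτ2
      have hbσ : bvec b0 b σ ⬝ᵥ u = 0 := by
        rw [← hxσ', dotProduct_comm, Statement1Aux.dot_symm _ (hsymm σ), hk1, dotProduct_zero]
      have hbτ : bvec b0 b τ ⬝ᵥ u = 0 := by
        rw [← hxτ', dotProduct_comm, Statement1Aux.dot_symm _ (hsymm τ), hk2, dotProduct_zero]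
      rw [hbc, add_dotProduct, smul_dotProduct, smul_dotProduct, hbσ, hbτ]
      simp
    · rw [hnegc]
      exact Statement1Aux.posSemidef_add (Statement1Aux.posSemidef_smul hσ3 ha)
        (Statement1Aux.posSemidef_smul hτ3 hb)
  constructor
  · refine ⟨hSconv, ?_⟩
    rintro σ hσ τ hτ a bb ha hb hab
    obtain ⟨hρ1, hρ2, hρ3⟩ := hSconv hσ hτ ha hb hab
    obtain ⟨xρ, hxρ⟩ := hρ2
    obtain ⟨xσ, hxσ⟩ := hσ.2.1
    obtain ⟨xτ, hxτ⟩ := hτ.2.1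
    have hDρ := hDval _ hρ1 xρ hxρ
    have hDσ := hDval _ hσ.1 xσ hxσ
    have hDτ := hDval _ hτ.1 xτ hxτ
    have hlin : E (a • σ + bb • τ) xρ = a * E σ xρ + bb * E τ xρ := by
      simp only [hE, dotProduct_add, dotProduct_smul, smul_eq_mul]
      linear_combination (qf A0 b0 0 xρ) * hab.symm
    have le1 : E σ xρ ≤ E σ xσ := hMax σ hσ.2.2 xσ hxσ xρ
    have le2 : E τ xρ ≤ E τ xτ := hMax τ hτ.2.2 xτ hxτ xρ
    rw [hDρ, hDσ, hDτ, hlin, smul_eq_mul, smul_eq_mul]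
    have g1 : a * E σ xρ ≤ a * E σ xσ := by gcongr
    have g2 : bb * E τ xρ ≤ bb * E τ xτ := by gcongr
    linarith
  · intro σ hσint hunit
    have hσdVs : σ ∈ dVs := interior_subset hσint
    set xσ : Fin n → ℝ := (Amat A0 A σ)⁻¹ *ᵥ bvec b0 b σ with hxσdef
    have hMx : Amat A0 A σ *ᵥ xσ = bvec b0 b σ := by
      rw [hxσdef, Matrix.mulVec_mulVec, Matrix.mul_nonsing_inv _ hunit, Matrix.one_mulVec]
    have hdetne : (Amat A0 A σ).det ≠ 0 := isUnit_iff_ne_zero.mp hunit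
    have hAcont : Continuous fun τ : Fin m → ℝ => Amat A0 A τ := by
      unfold Amat
      exact continuous_const.add (continuous_finset_sum _ fun k _ =>
        (continuous_apply k).smul continuous_const)
    have hbcont : Continuous (bvec b0 b) := by
      unfold bvec
      exact continuous_const.add (continuous_finset_sum _ fun k _ =>
        (continuous_apply k).smul continuous_const)
    have hdetcont : Continuous fun τ => (Amat A0 A τ).det := hAcont.matrix_det
    have hinv : ContinuousAt (fun τ => (Amat A0 A τ)⁻¹) σ := by
      refine ContinuousAt.comp ?_ hAcont.continuousAt
      refine continuousAt_matrix_inv _ ?_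
      rw [Ring.inverse_eq_inv']
      exact continuousAt_inv₀ hdetne
    set xf : (Fin m → ℝ) → (Fin n → ℝ) := fun τ => (Amat A0 A τ)⁻¹ *ᵥ bvec b0 b τ with hxf
    have hxcont : ContinuousAt xf σ := by
      have hmvc : Continuous fun p : Matrix (Fin n) (Fin n) ℝ × (Fin n → ℝ) => p.1 *ᵥ p.2 :=
        continuous_fst.matrix_mulVec continuous_snd
      exact hmvc.continuousAt.comp (hinv.prodMk hbcont.continuousAt)
    set g : Fin m → Fin n → ℝ := fun k => b k - A k *ᵥ xσ with hg
    have hres : ∀ τ, bvec b0 b τ - Amat A0 A τ *ᵥ xσ = ∑ k, (τ k - σ k) • g k := by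
      intro τ
      funext i
      have h0 := congrFun hMx i
      simp only [Amat, bvec, Matrix.add_mulVec, Statement1Aux.sum_smul_mulVec,
        Finset.sum_apply, Pi.add_apply, Pi.smul_apply, smul_eq_mul] at h0 ⊢
      simp only [hg, Pi.sub_apply, Pi.smul_apply, Finset.sum_apply, Pi.add_apply,
        smul_eq_mul, sub_mul, mul_sub, Finset.sum_sub_distrib]
      linarith [h0]
    set C : ℝ := ∑ k, ‖g k‖ with hC
    have hC0 : 0 ≤ C := Finset.sum_nonneg fun k _ => norm_nonneg _
    have hrb : ∀ τ : Fin m → ℝ, ‖∑ k, (τ k - σ k) • g k‖ ≤ C * ‖τ - σ‖ := by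
      intro τ
      calc ‖∑ k, (τ k - σ k) • g k‖ ≤ ∑ k, ‖(τ k - σ k) • g k‖ := norm_sum_le _ _
        _ ≤ ∑ k, ‖τ - σ‖ * ‖g k‖ := by
            refine Finset.sum_le_sum fun k _ => ?_
            rw [norm_smul, Real.norm_eq_abs]
            have : |τ k - σ k| = ‖(τ - σ) k‖ := by simp [Real.norm_eq_abs]
            rw [this]
            exact mul_le_mul_of_nonneg_right (norm_le_pi_norm (τ - σ) k) (norm_nonneg _)
        _ = C * ‖τ - σ‖ := by rw [hC, Finset.sum_mul]; exact Finset.sum_congr rfl fun k _ => mul_comm _ _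
    rw [hasFDerivAt_iff_isLittleO, Asymptotics.isLittleO_iff]
    intro ε hε
    set ε' : ℝ := ε / ((n : ℝ) * C + 1) with hε'def
    have hden : (0:ℝ) < (n : ℝ) * C + 1 := by positivity
    have hε' : 0 < ε' := by positivity
    have hev1 : ∀ᶠ τ in nhds σ, τ ∈ interior dVs ∧ (Amat A0 A τ).det ≠ 0 := by
      have hopen : IsOpen {τ : Fin m → ℝ | τ ∈ interior dVs ∧ (Amat A0 A τ).det ≠ 0} :=
        isOpen_interior.inter (isOpen_ne.preimage hdetcont)
      exact Filter.eventually_of_mem (hopen.mem_nhds ⟨hσint, hdetne⟩) fun τ hτ => hτ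
    have hev2 : ∀ᶠ τ in nhds σ, ‖xf τ - xσ‖ ≤ ε' := by
      have h := hxcont (Metric.closedBall_mem_nhds (xf σ) hε')
      refine Filter.eventually_of_mem h fun τ hτ => ?_
      simpa [Metric.mem_closedBall, dist_eq_norm] using hτ
    filter_upwards [hev1, hev2] with τ hτ1 hτ2
    obtain ⟨hτdVs, hτdet⟩ := hτ1
    have hτunit : IsUnit (Amat A0 A τ).det := isUnit_iff_ne_zero.mpr hτdet
    have hxτsol : Amat A0 A τ *ᵥ xf τ = bvec b0 b τ := by
      rw [hxf, Matrix.mulVec_mulVec, Matrix.mul_nonsing_inv _ hτunit, Matrix.one_mulVec]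
    have hDτ : D τ = E τ (xf τ) := hDval τ (interior_subset hτdVs) (xf τ) hxτsol
    have hDσ' : D σ = E σ xσ := hDval σ hσdVs xσ hMx
    have hAmulΔ : Amat A0 A τ *ᵥ (xf τ - xσ) = ∑ k, (τ k - σ k) • g k := by
      rw [Matrix.mulVec_sub, hxτsol, hres τ]
    have hkey : D τ - D σ - dotCLM (qvec A b c xσ) (τ - σ)
        = -((1/2 : ℝ) * ((xf τ - xσ) ⬝ᵥ Amat A0 A τ *ᵥ (xf τ - xσ))) := by
      have hlin : E τ xσ - E σ xσ = qvec A b c xσ ⬝ᵥ (τ - σ) := by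
        simp only [hE, dotProduct_sub]
        ring
      have hdCLM : dotCLM (qvec A b c xσ) (τ - σ) = qvec A b c xσ ⬝ᵥ (τ - σ) := rfl
      have hdiff := Statement1Aux.qf_sub_solution (Amat A0 A τ) (hsymm τ) (bvec b0 b τ)
        (c ⬝ᵥ τ) xσ (xf τ) hxτsol
      rw [hDτ, hDσ', hdCLM, ← hlin, hEq τ (xf τ), hEq τ xσ]
      linarith [hdiff]
    rw [hkey]
    have hdot := Statement1Aux.abs_dot_le (xf τ - xσ) (Amat A0 A τ *ᵥ (xf τ - xσ))
    rw [hAmulΔ] at hdot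
    have hrn : ‖Amat A0 A τ *ᵥ (xf τ - xσ)‖ ≤ C * ‖τ - σ‖ := by rw [hAmulΔ]; exact hrb τ
    have hεeq : ε' * ((n : ℝ) * C + 1) = ε := by
      rw [hε'def]; field_simp
    have hnn : (0:ℝ) ≤ ‖τ - σ‖ := norm_nonneg _
    rw [Real.norm_eq_abs, abs_neg, abs_mul, abs_of_pos (by norm_num : (0:ℝ) < (1/2:ℝ))]
    calc (1/2 : ℝ) * |(xf τ - xσ) ⬝ᵥ Amat A0 A τ *ᵥ (xf τ - xσ)|
        ≤ (1/2 : ℝ) * ((n : ℝ) * (‖xf τ - xσ‖ * ‖Amat A0 A τ *ᵥ (xf τ - xσ)‖)) := by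
          have := Statement1Aux.abs_dot_le (xf τ - xσ) (Amat A0 A τ *ᵥ (xf τ - xσ))
          linarith
      _ ≤ ε * ‖τ - σ‖ := by
          have h1 : ‖xf τ - xσ‖ * ‖Amat A0 A τ *ᵥ (xf τ - xσ)‖ ≤ ε' * (C * ‖τ - σ‖) := by
            exact mul_le_mul hτ2 hrn (norm_nonneg _) hε'.le
          have h2 : (n : ℝ) * C * ε' ≤ ε := by nlinarith
          nlinarith [norm_nonneg (τ - σ), hε'.le, hC0, Nat.cast_nonneg (α := ℝ) n]
end
end

section
/- Let (x̄,σ̄) ∈ ℝⁿ × dom V* satisfy A(σ̄)x̄ = b(σ̄) (i.e., ∇_xΞ(x̄,σ̄) = 0) and q(x̄) ∈ ∂V*(σ̄). Then x̄ ∈ dom f, σ̄ ∈ S_col, σ̄ ∈ ∂V(q(x̄)), and f(x̄) = Ξ(x̄,σ̄) = D(σ̄). -/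
open Matrix Set

noncomputable section

section FMaux

variable {m : ℕ}

lemma clm_eq_dot (L : (Fin m → ℝ) →L[ℝ] ℝ) (y : Fin m → ℝ) :
    y ⬝ᵥ (fun i => L (Pi.single i 1)) = L y := by
  have hy : y = ∑ i, y i • (Pi.single i 1 : Fin m → ℝ) := by
    ext j
    simp [Pi.single_apply, Finset.sum_apply, mul_ite]
  calc y ⬝ᵥ (fun i => L (Pi.single i 1)) = ∑ i, y i * L (Pi.single i 1) := rfl
    _ = L (∑ i, y i • (Pi.single i 1 : Fin m → ℝ)) := by
        rw [map_sum]; simp [smul_eq_mul]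
    _ = L y := by rw [← hy]

lemma mem_dVs_of_ub {V Vs : (Fin m → ℝ) → ℝ} {dV dVs : Set (Fin m → ℝ)}
    (hne : dV.Nonempty) (hconj : isConjugate V dV Vs dVs)
    {σ : Fin m → ℝ} {M : ℝ} (h : ∀ y ∈ dV, y ⬝ᵥ σ - V y ≤ M) :
    σ ∈ dVs ∧ Vs σ ≤ M := by
  have hbdd : BddAbove ((fun y => y ⬝ᵥ σ - V y) '' dV) :=
    ⟨M, by rintro _ ⟨y, hy, rfl⟩; exact h y hy⟩
  have hmem : σ ∈ dVs := by rw [hconj.1]; exact hbdd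
  refine ⟨hmem, ?_⟩
  rw [hconj.2 σ hmem]
  exact csSup_le (hne.image _) (by rintro _ ⟨y, hy, rfl⟩; exact h y hy)

lemma sub_le_Vs {V Vs : (Fin m → ℝ) → ℝ} {dV dVs : Set (Fin m → ℝ)}
    (hconj : isConjugate V dV Vs dVs) {σ y : Fin m → ℝ}
    (hσ : σ ∈ dVs) (hy : y ∈ dV) : y ⬝ᵥ σ - V y ≤ Vs σ := by
  rw [hconj.2 σ hσ]
  exact le_csSup (by have := hσ; rwa [hconj.1] at this) ⟨y, hy, rfl⟩

lemma sep_core {V : (Fin m → ℝ) → ℝ} {dV : Set (Fin m → ℝ)}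
    (hV : properLscConvex V dV) {y : Fin m → ℝ} {t : ℝ}
    (hyt : ¬ (y ∈ dV ∧ V y ≤ t)) :
    ∃ (g : Fin m → ℝ) (r u : ℝ), 0 ≤ r ∧ y ⬝ᵥ g + t * r < u ∧
      ∀ y' ∈ dV, u < y' ⬝ᵥ g + V y' * r := by
  obtain ⟨hne, hcvx, hcl⟩ := hV
  have hnot : ((y, t) : (Fin m → ℝ) × ℝ) ∉
      {p : (Fin m → ℝ) × ℝ | p.1 ∈ dV ∧ V p.1 ≤ p.2} := hyt
  obtain ⟨f, u, hfu, hub⟩ :=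
    geometric_hahn_banach_point_closed hcvx.convex_epigraph hcl hnot
  set L : (Fin m → ℝ) →L[ℝ] ℝ := f.comp (ContinuousLinearMap.inl ℝ _ ℝ) with hL
  set r : ℝ := f (0, 1) with hrdef
  have hsplit : ∀ (z : Fin m → ℝ) (s : ℝ), f (z, s) = L z + s * r := by
    intro z s
    have h1 : ((z, s) : (Fin m → ℝ) × ℝ) = (z, 0) + s • ((0 : Fin m → ℝ), (1 : ℝ)) := by
      simp [Prod.ext_iff]
    rw [h1, map_add, f.map_smul, smul_eq_mul]
    simp [hL, hrdef]
  obtain ⟨y0, hy0⟩ := hne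
  have hr0 : 0 ≤ r := by
    by_contra hneg
    push_neg at hneg
    set k : ℝ := max 0 ((u - L y0 - V y0 * r) / r) with hk
    have hk0 : 0 ≤ k := le_max_left _ _
    have hmem : ((y0, V y0 + k) : (Fin m → ℝ) × ℝ) ∈
        {p : (Fin m → ℝ) × ℝ | p.1 ∈ dV ∧ V p.1 ≤ p.2} :=
      ⟨hy0, by show V y0 ≤ V y0 + k; linarith⟩
    have h2 := hub _ hmem
    rw [hsplit] at h2
    have hkr : k * r ≤ ((u - L y0 - V y0 * r) / r) * r :=
      mul_le_mul_of_nonpos_right (le_max_right _ _) hneg.le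
    rw [div_mul_cancel₀ _ hneg.ne] at hkr
    nlinarith
  refine ⟨fun i => L (Pi.single i 1), r, u, hr0, ?_, ?_⟩
  · rw [clm_eq_dot]
    have := hfu
    rw [hsplit] at this
    linarith
  · intro y' hy'
    have h2 := hub (y', V y') ⟨hy', le_refl _⟩
    rw [hsplit] at h2
    rw [clm_eq_dot]
    linarith

lemma pos_r_mem {V Vs : (Fin m → ℝ) → ℝ} {dV dVs : Set (Fin m → ℝ)}
    (hV : properLscConvex V dV) (hconj : isConjugate V dV Vs dVs)
    {g : Fin m → ℝ} {r u : ℝ} (hr : 0 < r)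
    (hub : ∀ y' ∈ dV, u < y' ⬝ᵥ g + V y' * r) :
    (-r⁻¹) • g ∈ dVs ∧ Vs ((-r⁻¹) • g) ≤ -u / r := by
  refine mem_dVs_of_ub hV.1 hconj ?_
  intro y' hy'
  have h1 := hub y' hy'
  rw [dotProduct_smul, smul_eq_mul, le_div_iff₀ hr]
  have key : -r⁻¹ * (y' ⬝ᵥ g) * r = -(y' ⬝ᵥ g) := by field_simp
  nlinarith [h1, key]

lemma dVs_nonempty {V Vs : (Fin m → ℝ) → ℝ} {dV dVs : Set (Fin m → ℝ)}
    (hV : properLscConvex V dV) (hconj : isConjugate V dV Vs dVs) :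
    ∃ σ0, σ0 ∈ dVs := by
  obtain ⟨y0, hy0⟩ := hV.1
  have hyt : ¬ (y0 ∈ dV ∧ V y0 ≤ V y0 - 1) := by
    rintro ⟨-, h⟩; linarith
  obtain ⟨g, r, u, hr0, hlt, hub⟩ := sep_core hV hyt
  have h1 := hub y0 hy0
  have hr : 0 < r := by
    rcases hr0.lt_or_eq with h | h
    · exact h
    · rw [← h] at hlt h1; simp at hlt h1; linarith
  exact ⟨_, (pos_r_mem hV hconj hr hub).1⟩

lemma fm_sep {V Vs : (Fin m → ℝ) → ℝ} {dV dVs : Set (Fin m → ℝ)}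
    (hV : properLscConvex V dV) (hconj : isConjugate V dV Vs dVs)
    {y : Fin m → ℝ} {t : ℝ} (hyt : ¬ (y ∈ dV ∧ V y ≤ t)) :
    ∃ σ ∈ dVs, t < y ⬝ᵥ σ - Vs σ := by
  obtain ⟨g, r, u, hr0, hlt, hub⟩ := sep_core hV hyt
  rcases hr0.lt_or_eq with hr | hr
  · -- r > 0
    obtain ⟨hmem, hVs⟩ := pos_r_mem hV hconj hr hub
    refine ⟨_, hmem, ?_⟩
    have hdot : y ⬝ᵥ ((-r⁻¹) • g) = -r⁻¹ * (y ⬝ᵥ g) := by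
      rw [dotProduct_smul, smul_eq_mul]
    have key : -r⁻¹ * (y ⬝ᵥ g) * r = -(y ⬝ᵥ g) := by field_simp
    have ht : t * r < u - y ⬝ᵥ g := by linarith
    have ht2 : t < -r⁻¹ * (y ⬝ᵥ g) - (-u / r) := by
      have h6 : t < (u - y ⬝ᵥ g) / r := (lt_div_iff₀ hr).2 ht
      have h7 : (u - y ⬝ᵥ g) / r = -r⁻¹ * (y ⬝ᵥ g) - (-u / r) := by
        field_simp
        ring
      linarith
    rw [hdot]
    linarith
  · -- r = 0
    rw [← hr] at hlt hub
    simp only [mul_zero, add_zero] at hlt hub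
    by_cases hy : y ∈ dV
    · exact absurd (hub y hy) (by linarith)
    obtain ⟨σ0, hσ0⟩ := dVs_nonempty hV hconj
    have hpos : 0 < u - y ⬝ᵥ g := by linarith
    set cc : ℝ := max 0 ((t - (y ⬝ᵥ σ0 - Vs σ0)) / (u - y ⬝ᵥ g) + 1) with hcc
    have hc0 : 0 ≤ cc := le_max_left _ _
    have key : ∀ y' ∈ dV, y' ⬝ᵥ (σ0 + (-cc) • g) - V y' ≤ Vs σ0 - cc * u := by
      intro y' hy'
      have h1 := sub_le_Vs hconj hσ0 hy'
      have h2 := hub y' hy'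
      have h3 : cc * u ≤ cc * (y' ⬝ᵥ g) := mul_le_mul_of_nonneg_left h2.le hc0
      rw [dotProduct_add, dotProduct_smul, smul_eq_mul]
      linarith
    obtain ⟨hmem, hVsσ⟩ := mem_dVs_of_ub hV.1 hconj key
    refine ⟨_, hmem, ?_⟩
    have hdot : y ⬝ᵥ (σ0 + (-cc) • g) = y ⬝ᵥ σ0 + (-cc) * (y ⬝ᵥ g) := by
      rw [dotProduct_add, dotProduct_smul, smul_eq_mul]
    have hcge : (t - (y ⬝ᵥ σ0 - Vs σ0)) / (u - y ⬝ᵥ g) + 1 ≤ cc := le_max_right _ _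
    have h4 : t - (y ⬝ᵥ σ0 - Vs σ0) < cc * (u - y ⬝ᵥ g) := by
      have h5 : ((t - (y ⬝ᵥ σ0 - Vs σ0)) / (u - y ⬝ᵥ g) + 1) * (u - y ⬝ᵥ g)
          ≤ cc * (u - y ⬝ᵥ g) := mul_le_mul_of_nonneg_right hcge hpos.le
      rw [add_mul, one_mul, div_mul_cancel₀ _ hpos.ne'] at h5
      linarith
    rw [hdot]
    nlinarith [h4, hVsσ]

end FMaux

/-- If `(xb,σb) ∈ ℝⁿ × dom V*` satisfies `A(σb)xb = b(σb)` and
`q(xb) ∈ ∂V*(σb)`, then `xb ∈ dom f`, `σb ∈ S_col`, `σb ∈ ∂V(q(xb))`, and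
`f(xb) = Ξ(xb,σb) = D(σb)`. -/
theorem statement2 {n m : ℕ}
    (A0 : Matrix (Fin n) (Fin n) ℝ) (A : Fin m → Matrix (Fin n) (Fin n) ℝ)
    (b0 : Fin n → ℝ) (b : Fin m → Fin n → ℝ) (c : Fin m → ℝ)
    (hA0 : A0.IsSymm) (hA : ∀ i, (A i).IsSymm)
    (V Vs : (Fin m → ℝ) → ℝ) (dV dVs : Set (Fin m → ℝ))
    (hV : properLscConvex V dV) (hconj : isConjugate V dV Vs dVs)
    (D : (Fin m → ℝ) → ℝ)
    (hD : ∀ σ ∈ dVs, bvec b0 b σ ∈ Set.range (Amat A0 A σ).mulVec →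
      ∀ x, Amat A0 A σ *ᵥ x = bvec b0 b σ →
        D σ = qf A0 b0 0 x + qvec A b c x ⬝ᵥ σ - Vs σ)
    (xb : Fin n → ℝ) (σb : Fin m → ℝ) (hσdom : σb ∈ dVs)
    (hcrit : Amat A0 A σb *ᵥ xb = bvec b0 b σb)
    (hsub : qvec A b c xb ∈ subdiff Vs dVs σb) :
    qvec A b c xb ∈ dV ∧
    bvec b0 b σb ∈ Set.range (Amat A0 A σb).mulVec ∧
    σb ∈ subdiff V dV (qvec A b c xb) ∧
    qf A0 b0 0 xb + V (qvec A b c xb) =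
      qf A0 b0 0 xb + qvec A b c xb ⬝ᵥ σb - Vs σb ∧
    qf A0 b0 0 xb + qvec A b c xb ⬝ᵥ σb - Vs σb = D σb := by
  obtain ⟨hσb', hsub'⟩ := hsub
  set y := qvec A b c xb with hy
  have hK : y ∈ dV ∧ V y ≤ y ⬝ᵥ σb - Vs σb := by
    by_contra hK
    obtain ⟨σ, hσ, hgt⟩ := fm_sep hV hconj hK
    have h1 := hsub' σ hσ
    rw [sub_dotProduct, dotProduct_comm σ y, dotProduct_comm σb y] at h1
    linarith
  obtain ⟨hydV, hle⟩ := hK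
  have hge : y ⬝ᵥ σb - V y ≤ Vs σb := sub_le_Vs hconj hσdom hydV
  have hVeq : V y = y ⬝ᵥ σb - Vs σb := le_antisymm hle (by linarith)
  refine ⟨hydV, ⟨xb, hcrit⟩, ⟨hydV, ?_⟩, by linarith,
    (hD σb hσdom ⟨xb, hcrit⟩ xb hcrit).symm⟩
  intro y' hy'
  have h2 := sub_le_Vs hconj hσdom hy'
  rw [sub_dotProduct]
  linarith
end
end

section
/- Let (x̄,σ̄) ∈ ℝⁿ × dom V* satisfy A(σ̄)x̄ = b(σ̄), q(x̄) ∈ ∂V*(σ̄), and assume A(σ̄) is positive semidefinite. Then σ̄ ∈ S_col⁺ and f(x̄) = inf_{x ∈ dom f} f(x) = Ξ(x̄,σ̄) = sup_{σ ∈ S_col⁺} D(σ) = D(σ̄). Furthermore, if σ̄ ∈ S⁺ (A(σ̄) positive definite), then x̄ is the unique global minimizer of f on dom f. -/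
open Matrix Set

noncomputable section

lemma dot_symm {n : ℕ} {M : Matrix (Fin n) (Fin n) ℝ} (hM : M.IsSymm)
    (a b : Fin n → ℝ) : a ⬝ᵥ M *ᵥ b = b ⬝ᵥ M *ᵥ a := by
  rw [Matrix.dotProduct_mulVec, ← Matrix.mulVec_transpose, hM.eq, dotProduct_comm]

lemma quad_expand {n : ℕ} {M : Matrix (Fin n) (Fin n) ℝ} (hM : M.IsSymm)
    {x0 v : Fin n → ℝ} (h : M *ᵥ x0 = v) (x : Fin n → ℝ) :
    ((1/2:ℝ) * (x ⬝ᵥ M *ᵥ x) - v ⬝ᵥ x) - ((1/2:ℝ) * (x0 ⬝ᵥ M *ᵥ x0) - v ⬝ᵥ x0)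
      = (1/2:ℝ) * ((x - x0) ⬝ᵥ M *ᵥ (x - x0)) := by
  subst h
  have e1 : (x - x0) ⬝ᵥ M *ᵥ (x - x0)
      = x ⬝ᵥ M *ᵥ x - x ⬝ᵥ M *ᵥ x0 - x0 ⬝ᵥ M *ᵥ x + x0 ⬝ᵥ M *ᵥ x0 := by
    rw [Matrix.mulVec_sub, sub_dotProduct, dotProduct_sub, dotProduct_sub]
    ring
  have e2 : (M *ᵥ x0) ⬝ᵥ x = x ⬝ᵥ M *ᵥ x0 := dotProduct_comm _ _
  have e3 : (M *ᵥ x0) ⬝ᵥ x0 = x0 ⬝ᵥ M *ᵥ x0 := dotProduct_comm _ _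
  rw [e1, e2, e3, dot_symm hM x0 x]
  ring

lemma qf_def' {n : ℕ} (A : Matrix (Fin n) (Fin n) ℝ) (b : Fin n → ℝ) (c : ℝ) (x : Fin n → ℝ) :
    (fun x => (1 / 2 : ℝ) * (x ⬝ᵥ A.mulVec x) - b ⬝ᵥ x + c) x
      = (1 / 2 : ℝ) * (x ⬝ᵥ A.mulVec x) - b ⬝ᵥ x + c := rfl


lemma sum_mulVec' {n m : ℕ} (A : Fin m → Matrix (Fin n) (Fin n) ℝ) (σ : Fin m → ℝ)
    (x : Fin n → ℝ) (s : Finset (Fin m)) :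
    (∑ k ∈ s, σ k • A k) *ᵥ x = ∑ k ∈ s, σ k • (A k *ᵥ x) := by
  induction s using Finset.cons_induction with
  | empty => simp
  | cons a s ha ih =>
    rw [Finset.sum_cons, Finset.sum_cons, Matrix.add_mulVec, Matrix.smul_mulVec, ih]

lemma dot_sum' {n : ℕ} {ι : Type*} (v : Fin n → ℝ) (w : ι → Fin n → ℝ) (s : Finset ι) :
    v ⬝ᵥ (∑ k ∈ s, w k) = ∑ k ∈ s, v ⬝ᵥ w k := by
  induction s using Finset.cons_induction with
  | empty => simp
  | cons a s ha ih => rw [Finset.sum_cons, Finset.sum_cons, dotProduct_add, ih]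

lemma sum_dot' {n m : ℕ} (b : Fin m → Fin n → ℝ) (σ : Fin m → ℝ)
    (x : Fin n → ℝ) (s : Finset (Fin m)) :
    (∑ k ∈ s, σ k • b k) ⬝ᵥ x = ∑ k ∈ s, σ k * (b k ⬝ᵥ x) := by
  induction s using Finset.cons_induction with
  | empty => simp
  | cons a s ha ih =>
    rw [Finset.sum_cons, Finset.sum_cons, add_dotProduct, smul_dotProduct, ih,
      smul_eq_mul]

lemma Xi_decomp' {n m : ℕ} (A0 : Matrix (Fin n) (Fin n) ℝ) (A : Fin m → Matrix (Fin n) (Fin n) ℝ)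
    (b0 : Fin n → ℝ) (b : Fin m → Fin n → ℝ) (c : Fin m → ℝ) (σ : Fin m → ℝ) (x : Fin n → ℝ) :
    ((1/2:ℝ) * (x ⬝ᵥ A0 *ᵥ x) - b0 ⬝ᵥ x + 0)
      + (fun i => (1/2:ℝ) * (x ⬝ᵥ (A i) *ᵥ x) - (b i) ⬝ᵥ x + c i) ⬝ᵥ σ
      = ((1/2:ℝ) * (x ⬝ᵥ ((A0 + ∑ k, σ k • A k)) *ᵥ x) - ((b0 + ∑ k, σ k • b k)) ⬝ᵥ x)
        + c ⬝ᵥ σ := by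
  have h1 : x ⬝ᵥ (A0 + ∑ k, σ k • A k) *ᵥ x
      = x ⬝ᵥ A0 *ᵥ x + ∑ k, σ k * (x ⬝ᵥ A k *ᵥ x) := by
    rw [Matrix.add_mulVec, dotProduct_add, sum_mulVec', dot_sum']
    simp [dotProduct_smul, smul_eq_mul]
  have h3 : (b0 + ∑ k, σ k • b k) ⬝ᵥ x = b0 ⬝ᵥ x + ∑ k, σ k * ((b k) ⬝ᵥ x) := by
    rw [add_dotProduct, sum_dot']
  have h2 : (fun i => (1/2:ℝ) * (x ⬝ᵥ (A i) *ᵥ x) - (b i) ⬝ᵥ x + c i) ⬝ᵥ σ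
      = (1/2:ℝ) * (∑ i, σ i * (x ⬝ᵥ A i *ᵥ x)) - (∑ i, σ i * (b i ⬝ᵥ x)) + ∑ i, c i * σ i := by
    show (∑ i, ((1/2:ℝ) * (x ⬝ᵥ A i *ᵥ x) - b i ⬝ᵥ x + c i) * σ i) = _
    rw [Finset.mul_sum, ← Finset.sum_sub_distrib, ← Finset.sum_add_distrib]
    exact Finset.sum_congr rfl fun i _ => by ring
  have h4 : c ⬝ᵥ σ = ∑ i, c i * σ i := rfl
  rw [h1, h2, h3, h4]
  ring


lemma Xi_decomp {n m : ℕ} (A0 : Matrix (Fin n) (Fin n) ℝ) (A : Fin m → Matrix (Fin n) (Fin n) ℝ)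
    (b0 : Fin n → ℝ) (b : Fin m → Fin n → ℝ) (c : Fin m → ℝ) (σ : Fin m → ℝ) (x : Fin n → ℝ) :
    qf A0 b0 0 x + qvec A b c x ⬝ᵥ σ
      = ((1/2:ℝ) * (x ⬝ᵥ (Amat A0 A σ) *ᵥ x) - (bvec b0 b σ) ⬝ᵥ x) + c ⬝ᵥ σ := by
  unfold qf qvec Amat bvec
  exact Xi_decomp' A0 A b0 b c σ x

section conj
variable {m : ℕ} {V Vs : (Fin m → ℝ) → ℝ} {dV dVs : Set (Fin m → ℝ)}

lemma fy (hconj : isConjugate V dV Vs dVs) {σ y : Fin m → ℝ}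
    (hσ : σ ∈ dVs) (hy : y ∈ dV) : y ⬝ᵥ σ - V y ≤ Vs σ := by
  rw [hconj.2 σ hσ]
  refine le_csSup ?_ ⟨y, hy, rfl⟩
  rw [hconj.1] at hσ; exact hσ

lemma conj_bound (hne : dV.Nonempty) (hconj : isConjugate V dV Vs dVs) {σ : Fin m → ℝ}
    {B : ℝ} (hb : ∀ y ∈ dV, y ⬝ᵥ σ - V y ≤ B) : σ ∈ dVs ∧ Vs σ ≤ B := by
  have hmem : σ ∈ dVs := by
    rw [hconj.1]
    exact ⟨B, by rintro _ ⟨y, hy, rfl⟩; exact hb y hy⟩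
  refine ⟨hmem, ?_⟩
  rw [hconj.2 σ hmem]
  exact csSup_le (hne.image _) (by rintro _ ⟨y, hy, rfl⟩; exact hb y hy)

lemma fm (hV : properLscConvex V dV) (hconj : isConjugate V dV Vs dVs)
    {σb yb : Fin m → ℝ} (hσdom : σb ∈ dVs)
    (hsub : ∀ σ' ∈ dVs, (σ' - σb) ⬝ᵥ yb ≤ Vs σ' - Vs σb) :
    yb ∈ dV ∧ V yb ≤ yb ⬝ᵥ σb - Vs σb := by
  by_contra hcon
  set t := yb ⬝ᵥ σb - Vs σb with ht
  have hnot : (yb, t) ∉ {p : (Fin m → ℝ) × ℝ | p.1 ∈ dV ∧ V p.1 ≤ p.2} := hcon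
  obtain ⟨f, u, hfu, hepi⟩ :=
    geometric_hahn_banach_point_closed hV.2.1.convex_epigraph hV.2.2 hnot
  set σg : Fin m → ℝ := fun i => f (Pi.single i 1, 0) with hσg
  set s : ℝ := f ((0 : Fin m → ℝ), (1 : ℝ)) with hsdef
  have hf : ∀ (y : Fin m → ℝ) (r : ℝ), f (y, r) = y ⬝ᵥ σg + r * s := by
    intro y r
    have hyr : (y, r) = (∑ i, y i • ((Pi.single i 1 : Fin m → ℝ), (0:ℝ)))
        + r • ((0 : Fin m → ℝ), (1 : ℝ)) := by
      refine Prod.ext ?_ ?_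
      · funext j
        rw [Prod.fst_add, Prod.fst_sum]
        simp [Finset.sum_apply, Pi.single_apply]
      · rw [Prod.snd_add, Prod.snd_sum]
        simp
    rw [hyr, map_add, map_sum]
    simp only [_root_.map_smul, smul_eq_mul]
    rfl
  have hepi' : ∀ y ∈ dV, ∀ r, V y ≤ r → u < y ⬝ᵥ σg + r * s := by
    intro y hy r hr
    have h := hepi (y, r) ⟨hy, hr⟩
    rwa [hf] at h
  have hpt : yb ⬝ᵥ σg + t * s < u := by rw [← hf]; exact hfu
  obtain ⟨y0, hy0⟩ := hV.1
  have hs : 0 ≤ s := by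
    by_contra hneg
    push_neg at hneg
    have h1 : u < y0 ⬝ᵥ σg + V y0 * s := hepi' y0 hy0 (V y0) le_rfl
    set r := (u - 1 - y0 ⬝ᵥ σg) / s with hr
    have hVr : V y0 ≤ r := by
      rw [hr, le_div_iff_of_neg hneg]
      nlinarith
    have h2 := hepi' y0 hy0 r hVr
    rw [hr, div_mul_cancel₀ _ (ne_of_lt hneg)] at h2
    linarith
  rcases eq_or_lt_of_le hs with hs0 | hs0
  · -- s = 0
    have hsz : s = 0 := hs0.symm
    have hb : ∀ y ∈ dV, y ⬝ᵥ (σb - σg) - V y ≤ Vs σb - u := by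
      intro y hy
      have h1 := fy hconj hσdom hy
      have h2 := hepi' y hy (V y) le_rfl
      rw [hsz, mul_zero, add_zero] at h2
      rw [dotProduct_sub]
      linarith
    obtain ⟨hmem, hVs'⟩ := conj_bound hV.1 hconj hb
    have h3 := hsub _ hmem
    have h4 : (σb - σg - σb) ⬝ᵥ yb = -(yb ⬝ᵥ σg) := by
      rw [sub_sub_cancel_left, neg_dotProduct, dotProduct_comm]
    rw [h4] at h3
    rw [hsz, mul_zero, add_zero] at hpt
    rw [ht] at hcon
    linarith
  · -- s > 0
    set σ' := (-(1/s)) • σg with hσ'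
    have hb : ∀ y ∈ dV, y ⬝ᵥ σ' - V y ≤ -(1/s) * u := by
      intro y hy
      have h2 := hepi' y hy (V y) le_rfl
      have e : y ⬝ᵥ σ' = -(1/s) * (y ⬝ᵥ σg) := by
        rw [hσ', dotProduct_smul, smul_eq_mul]
      rw [e, ← mul_le_mul_iff_right₀ hs0]
      have e1 : s * (-(1/s) * (y ⬝ᵥ σg) - V y) = -(y ⬝ᵥ σg) - s * V y := by
        field_simp
      have e2 : s * (-(1/s) * u) = -u := by field_simp
      rw [e1, e2]
      nlinarith
    obtain ⟨hmem, hVs'⟩ := conj_bound hV.1 hconj hb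
    have h3 := hsub _ hmem
    have h4 : (σ' - σb) ⬝ᵥ yb = yb ⬝ᵥ σ' - yb ⬝ᵥ σb := by
      rw [sub_dotProduct, dotProduct_comm, dotProduct_comm σb]
    have e : yb ⬝ᵥ σ' = -(1/s) * (yb ⬝ᵥ σg) := by
      rw [hσ', dotProduct_smul, smul_eq_mul]
    rw [h4, e] at h3
    have key : -(1/s) * (yb ⬝ᵥ σg) + (1/s) * u ≤ t := by
      rw [ht]
      linarith
    have key2 : s * (-(1/s) * (yb ⬝ᵥ σg) + (1/s) * u) ≤ s * t :=
      mul_le_mul_of_nonneg_left key hs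
    have e3 : s * (-(1/s) * (yb ⬝ᵥ σg) + (1/s) * u) = -(yb ⬝ᵥ σg) + u := by
      field_simp
    rw [e3] at key2
    nlinarith
end conj


/-- If `(x̄,σ̄) ∈ ℝⁿ × dom V*` satisfies `A(σ̄)x̄ = b(σ̄)`,
`q(x̄) ∈ ∂V*(σ̄)` and `A(σ̄) ⪰ 0`, then `σ̄ ∈ S_col⁺` and
`f(x̄) = inf_{x ∈ dom f} f(x) = Ξ(x̄,σ̄) = sup_{σ ∈ S_col⁺} D(σ) = D(σ̄)`;
moreover if `A(σ̄) ≻ 0` then `x̄` is the unique global minimizer of `f` on `dom f`. -/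
theorem statement3 {n m : ℕ}
    (A0 : Matrix (Fin n) (Fin n) ℝ) (A : Fin m → Matrix (Fin n) (Fin n) ℝ)
    (b0 : Fin n → ℝ) (b : Fin m → Fin n → ℝ) (c : Fin m → ℝ)
    (hA0 : A0.IsSymm) (hA : ∀ i, (A i).IsSymm)
    (V Vs : (Fin m → ℝ) → ℝ) (dV dVs : Set (Fin m → ℝ))
    (hV : properLscConvex V dV) (hconj : isConjugate V dV Vs dVs)
    (D : (Fin m → ℝ) → ℝ)
    (hD : ∀ σ ∈ dVs, bvec b0 b σ ∈ Set.range (Amat A0 A σ).mulVec →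
      ∀ x, Amat A0 A σ *ᵥ x = bvec b0 b σ →
        D σ = qf A0 b0 0 x + qvec A b c x ⬝ᵥ σ - Vs σ)
    (xb : Fin n → ℝ) (σb : Fin m → ℝ) (hσdom : σb ∈ dVs)
    (hcrit : Amat A0 A σb *ᵥ xb = bvec b0 b σb)
    (hsub : qvec A b c xb ∈ subdiff Vs dVs σb)
    (hpsd : (Amat A0 A σb).PosSemidef) :
    bvec b0 b σb ∈ Set.range (Amat A0 A σb).mulVec ∧
    qvec A b c xb ∈ dV ∧
    (∀ x, qvec A b c x ∈ dV →
      qf A0 b0 0 xb + V (qvec A b c xb) ≤ qf A0 b0 0 x + V (qvec A b c x)) ∧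
    qf A0 b0 0 xb + V (qvec A b c xb) =
      qf A0 b0 0 xb + qvec A b c xb ⬝ᵥ σb - Vs σb ∧
    qf A0 b0 0 xb + qvec A b c xb ⬝ᵥ σb - Vs σb = D σb ∧
    (∀ σ, σ ∈ dVs → bvec b0 b σ ∈ Set.range (Amat A0 A σ).mulVec →
      (Amat A0 A σ).PosSemidef → D σ ≤ D σb) ∧
    ((Amat A0 A σb).PosDef →
      ∀ x, qvec A b c x ∈ dV → x ≠ xb →
        qf A0 b0 0 xb + V (qvec A b c xb) < qf A0 b0 0 x + V (qvec A b c x)) := by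
  obtain ⟨-, hsub2⟩ := hsub
  obtain ⟨hydom, hVle⟩ := fm hV hconj hσdom hsub2
  have hVge : qvec A b c xb ⬝ᵥ σb - V (qvec A b c xb) ≤ Vs σb := fy hconj hσdom hydom
  have hVeq : V (qvec A b c xb) = qvec A b c xb ⬝ᵥ σb - Vs σb :=
    le_antisymm hVle (by linarith)
  have hsymm : ∀ σ : Fin m → ℝ, (Amat A0 A σ).IsSymm := by
    intro σ
    unfold Amat
    rw [Matrix.IsSymm, Matrix.transpose_add, Matrix.transpose_sum, hA0]
    congr 1
    exact Finset.sum_congr rfl fun k _ => by rw [Matrix.transpose_smul, hA k]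
  have Xid : ∀ (σ : Fin m → ℝ) (x0 : Fin n → ℝ), (Amat A0 A σ) *ᵥ x0 = bvec b0 b σ →
      ∀ x, (qf A0 b0 0 x + qvec A b c x ⬝ᵥ σ) - (qf A0 b0 0 x0 + qvec A b c x0 ⬝ᵥ σ)
        = (1/2:ℝ) * ((x - x0) ⬝ᵥ (Amat A0 A σ) *ᵥ (x - x0)) := by
    intro σ x0 h0 x
    rw [Xi_decomp, Xi_decomp]
    have q := quad_expand (hsymm σ) h0 x
    linarith
  refine ⟨⟨xb, hcrit⟩, hydom, ?_, by rw [hVeq]; ring, (hD σb hσdom ⟨xb, hcrit⟩ xb hcrit).symm, ?_, ?_⟩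
  · intro x hx
    have h1 : qvec A b c x ⬝ᵥ σb - V (qvec A b c x) ≤ Vs σb := fy hconj hσdom hx
    have h2 := Xid σb xb hcrit x
    have h3 : 0 ≤ (x - xb) ⬝ᵥ (Amat A0 A σb) *ᵥ (x - xb) := by
      have h := hpsd.dotProduct_mulVec_nonneg (x - xb)
      simpa using h
    linarith
  · intro σ hσ hrange hpsdσ
    obtain ⟨x0, hx0⟩ := hrange
    rw [hD σ hσ ⟨x0, hx0⟩ x0 hx0, hD σb hσdom ⟨xb, hcrit⟩ xb hcrit]
    have h2 := Xid σ x0 hx0 xb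
    have h3 : 0 ≤ (xb - x0) ⬝ᵥ (Amat A0 A σ) *ᵥ (xb - x0) := by
      have h := hpsdσ.dotProduct_mulVec_nonneg (xb - x0)
      simpa using h
    have h1 : qvec A b c xb ⬝ᵥ σ - V (qvec A b c xb) ≤ Vs σ := fy hconj hσ hydom
    linarith
  · intro hpd x hx hne
    have h2 := Xid σb xb hcrit x
    have h3 : 0 < (x - xb) ⬝ᵥ (Amat A0 A σb) *ᵥ (x - xb) := by
      have h := hpd.dotProduct_mulVec_pos (sub_ne_zero.mpr hne)
      simpa using h
    have h1 : qvec A b c x ⬝ᵥ σb - V (qvec A b c x) ≤ Vs σb := fy hconj hσdom hx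
    linarith
end
end

section
/- Let (x̄,σ̄) ∈ ℝⁿ × int(dom V*) be a critical point of Ξ, i.e., A(σ̄)x̄ = b(σ̄) and q(x̄) = ∇V*(σ̄). Then x̄ ∈ X₀, σ̄ ∈ S_col, x̄ is a critical point of f (∇f(x̄) = 0), and f(x̄) = Ξ(x̄,σ̄) = D(σ̄); moreover, if σ̄ ∈ S₀ then σ̄ is a critical point of D (∇D(σ̄) = 0). -/
open Matrix Set

noncomputable section

/-- `V ∈ Γ_sc(ℝᵐ)`: a proper lsc convex function of Legendre type, i.e. essentially smooth
(differentiable on the nonempty interior of its domain, with gradient `gV`, and with empty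
subdifferential outside this interior) and essentially strictly convex. -/
def LegendreType {m : ℕ} (V : (Fin m → ℝ) → ℝ) (dV : Set (Fin m → ℝ))
    (gV : (Fin m → ℝ) → (Fin m → ℝ)) : Prop :=
  (interior dV).Nonempty ∧
  (∀ y ∈ interior dV, HasFDerivAt V (dotCLM (gV y)) y) ∧
  (∀ y, y ∉ interior dV → subdiff V dV y = ∅) ∧
  StrictConvexOn ℝ (interior dV) V

section
variable {n m k : ℕ}

@[simp] lemma s4_dotCLM_apply (g v : Fin k → ℝ) : dotCLM g v = g ⬝ᵥ v := rfl

lemma s4_hasFDerivAt_qf (A : Matrix (Fin n) (Fin n) ℝ) (hA : A.IsSymm)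
    (b : Fin n → ℝ) (c : ℝ) (x : Fin n → ℝ) :
    HasFDerivAt (qf A b c) (dotCLM (A *ᵥ x - b)) x := by
  have h1 : ∀ i : Fin n, HasFDerivAt (fun x : Fin n → ℝ => x i)
      (ContinuousLinearMap.proj (R := ℝ) (φ := fun _ : Fin n => ℝ) i) x := fun i => hasFDerivAt_apply i x
  have hq : HasFDerivAt (fun x : Fin n → ℝ => x ⬝ᵥ A.mulVec x)
      (∑ i, ∑ j, A i j • (x j • ContinuousLinearMap.proj (R := ℝ) (φ := fun _ : Fin n => ℝ) i
        + x i • ContinuousLinearMap.proj (R := ℝ) (φ := fun _ : Fin n => ℝ) j)) x := by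
    have : HasFDerivAt (fun x : Fin n → ℝ => ∑ i, ∑ j, A i j * (x i * x j))
        (∑ i, ∑ j, A i j • (x j • ContinuousLinearMap.proj (R := ℝ) (φ := fun _ : Fin n => ℝ) i
          + x i • ContinuousLinearMap.proj (R := ℝ) (φ := fun _ : Fin n => ℝ) j)) x := by
      refine HasFDerivAt.fun_sum fun i _ => HasFDerivAt.fun_sum fun j _ => ?_
      have := ((h1 i).mul (h1 j)).const_mul (A i j)
      refine this.congr_fderiv ?_
      ext v
      simp only [ContinuousLinearMap.smul_apply, ContinuousLinearMap.add_apply,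
        ContinuousLinearMap.proj_apply, smul_eq_mul]
      ring
    convert this using 2 with x
    simp only [dotProduct, Matrix.mulVec, Finset.mul_sum]
    exact Finset.sum_congr rfl fun i _ => Finset.sum_congr rfl fun j _ => by ring
  have hb : HasFDerivAt (fun x : Fin n → ℝ => b ⬝ᵥ x) (dotCLM b) x :=
    (dotCLM b).hasFDerivAt
  have := ((hq.const_mul ((1:ℝ)/2)).sub hb).add_const c
  refine this.congr_fderiv (Eq.symm ?_)
  ext v
  simp only [ContinuousLinearMap.coe_sub', ContinuousLinearMap.coe_smul',
    ContinuousLinearMap.coe_sum', Pi.sub_apply, Pi.smul_apply, Finset.sum_apply,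
    ContinuousLinearMap.add_apply, ContinuousLinearMap.smul_apply,
    ContinuousLinearMap.proj_apply, s4_dotCLM_apply, smul_eq_mul]
  have hsymm : ∀ i j, A i j = A j i := fun i j => by
    have := congrFun (congrFun hA j) i
    simpa [Matrix.transpose_apply] using this
  simp only [sub_dotProduct, Matrix.mulVec, dotProduct]
  rw [Finset.sum_comm (γ := Fin n)]
  have e1 : ∑ y : Fin n, ∑ x_1 : Fin n, A x_1 y * (x y * v x_1 + x x_1 * v y)
      = (∑ i : Fin n, ∑ j : Fin n, A i j * x j * v i)
        + ∑ i : Fin n, ∑ j : Fin n, A i j * x j * v i := by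
    have t1 : ∑ y : Fin n, ∑ x_1 : Fin n, A x_1 y * (x y * v x_1 + x x_1 * v y)
        = (∑ y : Fin n, ∑ x_1 : Fin n, A x_1 y * x y * v x_1)
          + ∑ y : Fin n, ∑ x_1 : Fin n, A y x_1 * x x_1 * v y := by
      rw [← Finset.sum_add_distrib]
      refine Finset.sum_congr rfl fun y _ => ?_
      rw [← Finset.sum_add_distrib]
      refine Finset.sum_congr rfl fun x1 _ => ?_
      rw [hsymm y x1]; ring
    rw [t1]
    congr 1
    rw [Finset.sum_comm]
  rw [e1]
  have e2 : ∑ i : Fin n, (A *ᵥ x - b) i * v i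
      = (∑ i : Fin n, ∑ j : Fin n, A i j * x j * v i) - ∑ i : Fin n, b i * v i := by
    rw [← Finset.sum_sub_distrib]
    exact Finset.sum_congr rfl fun i _ => by
      simp [Matrix.mulVec, dotProduct, Finset.sum_mul, sub_mul]
  rw [e2]
  ring

end

section
variable {n m k : ℕ}

lemma s4_Amat_mulVec (A0 : Matrix (Fin n) (Fin n) ℝ) (A : Fin m → Matrix (Fin n) (Fin n) ℝ)
    (σ : Fin m → ℝ) (v : Fin n → ℝ) :
    Amat A0 A σ *ᵥ v = A0 *ᵥ v + ∑ i, σ i • (A i *ᵥ v) := by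
  unfold Amat
  rw [Matrix.add_mulVec]
  congr 1
  funext j
  simp only [Matrix.mulVec, dotProduct, Finset.sum_apply, Matrix.sum_apply,
    Matrix.smul_apply, Pi.smul_apply, smul_eq_mul, Finset.sum_mul]
  rw [Finset.sum_comm]
  exact Finset.sum_congr rfl fun i _ => by rw [Finset.mul_sum]; exact Finset.sum_congr rfl fun l _ => by ring

lemma s4_sum_dot {ι : Type*} (s : Finset ι) (f : ι → (Fin n → ℝ)) (v : Fin n → ℝ) :
    (∑ i ∈ s, f i) ⬝ᵥ v = ∑ i ∈ s, f i ⬝ᵥ v := by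
  simp only [dotProduct, Finset.sum_apply, Finset.sum_mul]
  exact Finset.sum_comm

lemma s4_key (A0 : Matrix (Fin n) (Fin n) ℝ) (A : Fin m → Matrix (Fin n) (Fin n) ℝ)
    (b0 : Fin n → ℝ) (b : Fin m → Fin n → ℝ) {σ : Fin m → ℝ} {xb : Fin n → ℝ}
    (hcrit1 : Amat A0 A σ *ᵥ xb = bvec b0 b σ) (v : Fin n → ℝ) :
    (A0 *ᵥ xb - b0) ⬝ᵥ v + ∑ i, σ i * ((A i *ᵥ xb - b i) ⬝ᵥ v) = 0 := by
  have h : A0 *ᵥ xb - b0 + ∑ i, σ i • (A i *ᵥ xb - b i) = 0 := by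
    have h1 := s4_Amat_mulVec A0 A σ xb
    rw [hcrit1] at h1
    have : bvec b0 b σ = b0 + ∑ i, σ i • b i := rfl
    rw [this] at h1
    have : ∑ i, σ i • (A i *ᵥ xb - b i) = ∑ i, σ i • (A i *ᵥ xb) - ∑ i, σ i • b i := by
      rw [← Finset.sum_sub_distrib]
      exact Finset.sum_congr rfl fun i _ => by rw [smul_sub]
    rw [this, sub_add_sub_comm, ← h1, sub_self]
  calc (A0 *ᵥ xb - b0) ⬝ᵥ v + ∑ i, σ i * ((A i *ᵥ xb - b i) ⬝ᵥ v)
      = (A0 *ᵥ xb - b0 + ∑ i, σ i • (A i *ᵥ xb - b i)) ⬝ᵥ v := by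
        rw [add_dotProduct, s4_sum_dot]
        congr 1
        exact Finset.sum_congr rfl fun i _ => by rw [smul_dotProduct]; simp
    _ = 0 := by rw [h]; simp

lemma s4_le_Vs {V Vs : (Fin m → ℝ) → ℝ} {dV dVs : Set (Fin m → ℝ)}
    (hconj : isConjugate V dV Vs dVs) {σ : Fin m → ℝ} (hσ : σ ∈ dVs)
    {y : Fin m → ℝ} (hy : y ∈ dV) : y ⬝ᵥ σ - V y ≤ Vs σ := by
  rw [hconj.2 σ hσ]
  exact le_csSup (by rw [hconj.1] at hσ; exact hσ) ⟨y, hy, rfl⟩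

lemma s4_Vs_le {V Vs : (Fin m → ℝ) → ℝ} {dV dVs : Set (Fin m → ℝ)} (hdV : dV.Nonempty)
    (hconj : isConjugate V dV Vs dVs) {σ : Fin m → ℝ} (hσ : σ ∈ dVs)
    {r : ℝ} (h : ∀ y ∈ dV, y ⬝ᵥ σ - V y ≤ r) : Vs σ ≤ r := by
  rw [hconj.2 σ hσ]
  exact csSup_le (hdV.image _) (by rintro t ⟨y, hy, rfl⟩; exact h y hy)

lemma s4_mem_dVs {V Vs : (Fin m → ℝ) → ℝ} {dV dVs : Set (Fin m → ℝ)}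
    (hconj : isConjugate V dV Vs dVs) {σ : Fin m → ℝ}
    {r : ℝ} (h : ∀ y ∈ dV, y ⬝ᵥ σ - V y ≤ r) : σ ∈ dVs := by
  rw [hconj.1]
  exact ⟨r, by rintro t ⟨y, hy, rfl⟩; exact h y hy⟩

lemma s4_Vs_convexOn {V Vs : (Fin m → ℝ) → ℝ} {dV dVs : Set (Fin m → ℝ)} (hdV : dV.Nonempty)
    (hconj : isConjugate V dV Vs dVs) : ConvexOn ℝ dVs Vs := by
  have hkey : ∀ σ₁ ∈ dVs, ∀ σ₂ ∈ dVs, ∀ a b : ℝ, 0 ≤ a → 0 ≤ b → a + b = 1 →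
      ∀ y ∈ dV, y ⬝ᵥ (a • σ₁ + b • σ₂) - V y ≤ a * Vs σ₁ + b * Vs σ₂ := by
    intro σ₁ h₁ σ₂ h₂ a b ha hb hab y hy
    have e : y ⬝ᵥ (a • σ₁ + b • σ₂) - V y
        = a * (y ⬝ᵥ σ₁ - V y) + b * (y ⬝ᵥ σ₂ - V y) := by
      simp [dotProduct_add, dotProduct_smul, smul_eq_mul]
      have : a * (y ⬝ᵥ σ₁) + b * (y ⬝ᵥ σ₂) - (a + b) * V y
          = a * (y ⬝ᵥ σ₁ - V y) + b * (y ⬝ᵥ σ₂ - V y) := by ring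
      rw [hab] at this
      linarith [this]
    rw [e]
    exact add_le_add (mul_le_mul_of_nonneg_left (s4_le_Vs hconj h₁ hy) ha)
      (mul_le_mul_of_nonneg_left (s4_le_Vs hconj h₂ hy) hb)
  constructor
  · intro σ₁ h₁ σ₂ h₂ a b ha hb hab
    exact s4_mem_dVs hconj (hkey σ₁ h₁ σ₂ h₂ a b ha hb hab)
  · intro σ₁ h₁ σ₂ h₂ a b ha hb hab
    exact s4_Vs_le hdV hconj (s4_mem_dVs hconj (hkey σ₁ h₁ σ₂ h₂ a b ha hb hab))
      (hkey σ₁ h₁ σ₂ h₂ a b ha hb hab)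

end

section
variable {k : ℕ}

lemma s4_path_hasDerivAt (σ w : Fin k → ℝ) (t₀ : ℝ) :
    HasDerivAt (fun t : ℝ => σ + t • w) w t₀ := by
  simpa using ((hasDerivAt_id t₀).smul_const w).const_add σ

lemma s4_comp_hasDerivAt {φ : (Fin k → ℝ) → ℝ} {y : Fin k → ℝ} (σ w : Fin k → ℝ)
    (hφ : HasFDerivAt φ (dotCLM y) σ) :
    HasDerivAt (fun t : ℝ => φ (σ + t • w)) (y ⬝ᵥ w) 0 := by
  have hφ' : HasFDerivAt φ (dotCLM y) (σ + (0:ℝ) • w) := by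
    simpa using hφ
  have := hφ'.comp_hasDerivAt 0 (s4_path_hasDerivAt σ w 0)
  exact this

lemma s4_deriv_le {φ : (Fin k → ℝ) → ℝ} {σ w y : Fin k → ℝ} {r : ℝ}
    (hφ : HasFDerivAt φ (dotCLM y) σ)
    (h : ∀ᶠ t in nhdsWithin (0:ℝ) (Set.Ioi 0), φ (σ + t • w) - φ σ ≤ t * r) :
    y ⬝ᵥ w ≤ r := by
  have hd := s4_comp_hasDerivAt σ w hφ
  have hs := hasDerivAt_iff_tendsto_slope.1 hd
  have hmono : nhdsWithin (0:ℝ) (Set.Ioi 0) ≤ nhdsWithin (0:ℝ) {(0:ℝ)}ᶜ :=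
    nhdsWithin_mono 0 (fun t ht => ne_of_gt ht)
  refine le_of_tendsto (hs.mono_left hmono) ?_
  filter_upwards [h, self_mem_nhdsWithin] with t ht htpos
  rw [slope_def_field]
  simp only [zero_smul, add_zero, sub_zero]
  rw [div_le_iff₀ (Set.mem_Ioi.1 htpos)]
  calc φ (σ + t • w) - φ σ ≤ t * r := by simpa using ht
    _ = r * t := mul_comm _ _

lemma s4_le_deriv {φ : (Fin k → ℝ) → ℝ} {σ w y : Fin k → ℝ} {r : ℝ}
    (hφ : HasFDerivAt φ (dotCLM y) σ)
    (h : ∀ᶠ t in nhdsWithin (0:ℝ) (Set.Ioi 0), t * r ≤ φ (σ + t • w) - φ σ) :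
    r ≤ y ⬝ᵥ w := by
  have hd := s4_comp_hasDerivAt σ w hφ
  have hs := hasDerivAt_iff_tendsto_slope.1 hd
  have hmono : nhdsWithin (0:ℝ) (Set.Ioi 0) ≤ nhdsWithin (0:ℝ) {(0:ℝ)}ᶜ :=
    nhdsWithin_mono 0 (fun t ht => ne_of_gt ht)
  refine ge_of_tendsto (hs.mono_left hmono) ?_
  filter_upwards [h, self_mem_nhdsWithin] with t ht htpos
  rw [slope_def_field]
  simp only [zero_smul, add_zero, sub_zero]
  rw [le_div_iff₀ (Set.mem_Ioi.1 htpos)]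
  calc r * t = t * r := mul_comm _ _
    _ ≤ φ (σ + t • w) - φ σ := by simpa using ht

/-- Gradient inequality for a convex function. -/
lemma s4_grad_le {φ : (Fin k → ℝ) → ℝ} {S : Set (Fin k → ℝ)} (hconv : ConvexOn ℝ S φ)
    {σ τ y : Fin k → ℝ} (hσ : σ ∈ S) (hτ : τ ∈ S)
    (hφ : HasFDerivAt φ (dotCLM y) σ) : y ⬝ᵥ (τ - σ) ≤ φ τ - φ σ := by
  refine s4_deriv_le hφ ?_
  have hIoc : Set.Ioc (0:ℝ) 1 ∈ nhdsWithin (0:ℝ) (Set.Ioi 0) :=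
    Ioc_mem_nhdsGT_of_mem (by constructor <;> norm_num)
  filter_upwards [hIoc] with t ht
  have h1 : σ + t • (τ - σ) = (1 - t) • σ + t • τ := by
    rw [smul_sub, sub_smul, one_smul]; abel
  have := hconv.2 hσ hτ (by linarith [ht.2] : (0:ℝ) ≤ 1 - t) (le_of_lt ht.1) (by ring)
  rw [h1]
  calc φ ((1 - t) • σ + t • τ) - φ σ ≤ (1 - t) * φ σ + t * φ τ - φ σ := by
        simpa [smul_eq_mul] using sub_le_sub_right this (φ σ)
    _ = t * (φ τ - φ σ) := by ring

end

section
variable {m : ℕ}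

lemma s4_fenchel {V Vs : (Fin m → ℝ) → ℝ} {dV dVs : Set (Fin m → ℝ)}
    (hV : properLscConvex V dV) (hconj : isConjugate V dV Vs dVs)
    {σb y : Fin m → ℝ} (hσint : σb ∈ interior dVs)
    (hφ : HasFDerivAt Vs (dotCLM y) σb) :
    y ∈ dV ∧ V y = y ⬝ᵥ σb - Vs σb := by
  obtain ⟨hdV, hVconv, hVcl⟩ := hV
  have hσb : σb ∈ dVs := interior_subset hσint
  have hKmem : (y, y ⬝ᵥ σb - Vs σb) ∈ {p : (Fin m → ℝ) × ℝ | p.1 ∈ dV ∧ V p.1 ≤ p.2} := by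
    by_contra hcon
    obtain ⟨f, u, hfK, hfp⟩ :=
      geometric_hahn_banach_closed_point hVconv.convex_epigraph hVcl hcon
    set s : Fin m → ℝ := fun i => f (Pi.single i 1, 0) with hs_def
    set β : ℝ := f (0, 1) with hβ_def
    have hf_eq : ∀ z : (Fin m → ℝ) × ℝ, f z = z.1 ⬝ᵥ s + z.2 * β := by
      intro z
      have hz : z = (∑ i, z.1 i • ((Pi.single i 1 : Fin m → ℝ), (0:ℝ)))
          + z.2 • ((0 : Fin m → ℝ), (1:ℝ)) := by
        apply Prod.ext
        · simp only [Prod.fst_add, Prod.smul_fst, Prod.fst_sum, Prod.smul_fst]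
          funext j
          simp [Finset.sum_apply, Pi.single_apply]
        · simp [Prod.snd_sum]
      calc f z = f (∑ i, z.1 i • ((Pi.single i 1 : Fin m → ℝ), (0:ℝ))
            + z.2 • ((0 : Fin m → ℝ), (1:ℝ))) := by rw [← hz]
        _ = z.1 ⬝ᵥ s + z.2 * β := by
            rw [map_add, map_sum, _root_.map_smul]
            simp only [_root_.map_smul, smul_eq_mul]
            rfl
    have hpt : u < y ⬝ᵥ s + (y ⬝ᵥ σb - Vs σb) * β := by
      have := hfp; rwa [hf_eq] at this
    obtain ⟨y0, hy0⟩ := id hdV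
    have hβ : β ≤ 0 := by
      by_contra hβpos
      push_neg at hβpos
      have hk : ∀ kk : ℝ, 0 ≤ kk → y0 ⬝ᵥ s + (V y0 + kk) * β < u := by
        intro kk hkk
        have := hfK (y0, V y0 + kk) ⟨hy0, by show V y0 ≤ V y0 + kk; linarith⟩
        rwa [hf_eq] at this
      set k0 : ℝ := max 0 ((u - y0 ⬝ᵥ s) / β - V y0) with hk0
      have h1 := hk k0 (le_max_left _ _)
      have h2 : (u - y0 ⬝ᵥ s) / β - V y0 ≤ k0 := le_max_right _ _
      have h3 : (u - y0 ⬝ᵥ s) / β ≤ V y0 + k0 := by linarith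
      have h4 : u - y0 ⬝ᵥ s ≤ (V y0 + k0) * β := by
        rw [div_le_iff₀ hβpos] at h3; linarith
      linarith
    rcases lt_or_eq_of_le hβ with hβlt | hβzero
    · -- β < 0
      have hβ' : 0 < -β := by linarith
      set s' : Fin m → ℝ := (-β)⁻¹ • s with hs'
      have hdot : ∀ p : Fin m → ℝ, p ⬝ᵥ s' = (-β)⁻¹ * (p ⬝ᵥ s) := by
        intro p; rw [hs', dotProduct_smul]; rfl
      have hsb : ∀ p ∈ dV, p ⬝ᵥ s' - V p < (-β)⁻¹ * u := by
        intro p hp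
        have h0 := hfK (p, V p) ⟨hp, le_refl _⟩
        rw [hf_eq] at h0
        have h2 := (mul_lt_mul_iff_right₀ (inv_pos.2 hβ')).2 h0
        rw [hdot]
        have hβne : β ≠ 0 := ne_of_lt hβlt
        have e : (-β)⁻¹ * (p ⬝ᵥ s + V p * β) = (-β)⁻¹ * (p ⬝ᵥ s) - V p := by
          field_simp
          ring
        linarith [e ▸ h2]
      have hmem : s' ∈ dVs := s4_mem_dVs hconj fun p hp => le_of_lt (hsb p hp)
      have hVs' : Vs s' ≤ (-β)⁻¹ * u :=
        s4_Vs_le hdV hconj hmem fun p hp => le_of_lt (hsb p hp)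
      have hgrad := s4_grad_le (s4_Vs_convexOn hdV hconj) hσb hmem hφ
      rw [dotProduct_sub] at hgrad
      have hpt' : (-β)⁻¹ * u < y ⬝ᵥ s' - (y ⬝ᵥ σb - Vs σb) := by
        have h2 := (mul_lt_mul_iff_right₀ (inv_pos.2 hβ')).2 hpt
        rw [hdot]
        have hβne : β ≠ 0 := ne_of_lt hβlt
        have e : (-β)⁻¹ * (y ⬝ᵥ s + (y ⬝ᵥ σb - Vs σb) * β)
            = (-β)⁻¹ * (y ⬝ᵥ s) - (y ⬝ᵥ σb - Vs σb) := by
          field_simp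
          ring
        linarith [e ▸ h2]
      linarith
    · -- β = 0
      rw [hβzero, mul_zero, add_zero] at hpt
      have hlt : ∀ p ∈ dV, p ⬝ᵥ s < u := by
        intro p hp
        have h0 := hfK (p, V p) ⟨hp, le_refl _⟩
        rw [hf_eq, hβzero, mul_zero, add_zero] at h0
        exact h0
      have hrec : ∀ t : ℝ, 0 < t → Vs (σb + t • s) - Vs σb ≤ t * u := by
        intro t ht
        have hbound : ∀ p ∈ dV, p ⬝ᵥ (σb + t • s) - V p ≤ Vs σb + t * u := by
          intro p hp
          rw [dotProduct_add, dotProduct_smul, smul_eq_mul]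
          have h1 := s4_le_Vs hconj hσb hp
          have h2 := (mul_le_mul_iff_right₀ ht).2 (le_of_lt (hlt p hp))
          linarith
        have hm := s4_mem_dVs hconj hbound
        have := s4_Vs_le hdV hconj hm hbound
        linarith
      have : y ⬝ᵥ s ≤ u := by
        refine s4_deriv_le hφ ?_
        filter_upwards [self_mem_nhdsWithin] with t ht
        exact hrec t (Set.mem_Ioi.1 ht)
      linarith
  refine ⟨hKmem.1, le_antisymm hKmem.2 ?_⟩
  have := s4_le_Vs hconj hσb hKmem.1
  linarith

end

section
variable {n m k : ℕ}

lemma s4_dot_self_nonneg (v : Fin k → ℝ) : 0 ≤ v ⬝ᵥ v :=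
  Finset.sum_nonneg fun i _ => mul_self_nonneg (v i)

lemma s4_grad_unique {V : (Fin k → ℝ) → ℝ} {dV : Set (Fin k → ℝ)}
    {y g σ : Fin k → ℝ} (hy : y ∈ interior dV)
    (hgV : HasFDerivAt V (dotCLM g) y)
    (hσ : σ ∈ subdiff V dV y) : σ = g := by
  have key : ∀ w : Fin k → ℝ, w ⬝ᵥ σ ≤ g ⬝ᵥ w := by
    intro w
    refine s4_le_deriv hgV ?_
    have hcont : Filter.Tendsto (fun t : ℝ => y + t • w) (nhds 0) (nhds y) := by
      have : Filter.Tendsto (fun t : ℝ => y + t • w) (nhds 0) (nhds (y + (0:ℝ) • w)) := by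
        apply Filter.Tendsto.const_add
        exact (continuous_id.smul continuous_const).tendsto 0
      simpa using this
    have hev : ∀ᶠ t : ℝ in nhds 0, y + t • w ∈ interior dV :=
      hcont.eventually (isOpen_interior.eventually_mem hy)
    filter_upwards [eventually_nhdsWithin_of_eventually_nhds hev] with t ht
    have := hσ.2 (y + t • w) (interior_subset ht)
    calc t * (w ⬝ᵥ σ) = (y + t • w - y) ⬝ᵥ σ := by
          rw [add_sub_cancel_left, smul_dotProduct]; rfl
      _ ≤ V (y + t • w) - V y := this
  have h1 := key (σ - g)
  rw [dotProduct_comm] at h1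
  have h2 : (σ - g) ⬝ᵥ (σ - g) ≤ 0 := by
    rw [sub_dotProduct]
    linarith
  have h3 : (σ - g) ⬝ᵥ (σ - g) = 0 := le_antisymm h2 (s4_dot_self_nonneg _)
  have h4 : σ - g = 0 := by
    by_contra hne
    have : 0 < (σ - g) ⬝ᵥ (σ - g) := by
      obtain ⟨i, hi⟩ := Function.ne_iff.1 hne
      have : 0 < (σ - g) i * (σ - g) i := by
        have hne0 : (σ - g) i ≠ 0 := by simpa using hi
        exact mul_self_pos.2 hne0
      calc 0 < (σ - g) i * (σ - g) i := this
        _ ≤ (σ - g) ⬝ᵥ (σ - g) :=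
          Finset.single_le_sum (fun j _ => mul_self_nonneg ((σ - g) j)) (Finset.mem_univ i)
    linarith
  exact sub_eq_zero.1 h4

lemma s4_hasFDerivAt_qvec (A : Fin m → Matrix (Fin n) (Fin n) ℝ) (hA : ∀ i, (A i).IsSymm)
    (b : Fin m → Fin n → ℝ) (c : Fin m → ℝ) (x : Fin n → ℝ) :
    HasFDerivAt (qvec A b c)
      (ContinuousLinearMap.pi fun i => dotCLM (A i *ᵥ x - b i)) x :=
  hasFDerivAt_pi.2 fun i => s4_hasFDerivAt_qf (A i) (hA i) (b i) (c i) x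

end

section
variable {n m : ℕ}

lemma s4_diff_apply (j : Fin m) (σb : Fin m → ℝ) :
    DifferentiableAt ℝ (fun σ : Fin m → ℝ => σ j) σb :=
  (hasFDerivAt_apply (𝕜 := ℝ) j σb).differentiableAt

lemma s4_det_diff {σb : Fin m → ℝ} (M : (Fin m → ℝ) → Matrix (Fin n) (Fin n) ℝ)
    (h : ∀ i j, DifferentiableAt ℝ (fun σ => M σ i j) σb) :
    DifferentiableAt ℝ (fun σ => (M σ).det) σb := by
  have e : (fun σ => (M σ).det)
      = fun σ => ∑ p : Equiv.Perm (Fin n),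
          ((Equiv.Perm.sign p : ℤ) : ℝ) * ∏ i, M σ (p i) i := by
    funext σ
    rw [Matrix.det_apply]
    exact Finset.sum_congr rfl fun p _ => by
      rw [Units.smul_def, zsmul_eq_mul]
  rw [e]
  apply DifferentiableAt.fun_sum
  intro p _
  exact ((HasFDerivAt.finset_prod
    (fun i (_ : i ∈ Finset.univ) => (h (p i) i).hasFDerivAt)).differentiableAt).const_mul _

lemma s4_Amat_entry_diff (A0 : Matrix (Fin n) (Fin n) ℝ)
    (A : Fin m → Matrix (Fin n) (Fin n) ℝ) (i j : Fin n) (σb : Fin m → ℝ) :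
    DifferentiableAt ℝ (fun σ => Amat A0 A σ i j) σb := by
  have e : (fun σ => Amat A0 A σ i j) = fun σ : Fin m → ℝ => A0 i j + ∑ k, σ k * A k i j := by
    funext σ
    simp [Amat, Matrix.sum_apply]
  rw [e]
  exact (differentiableAt_const _).add
    (DifferentiableAt.fun_sum fun k _ => (s4_diff_apply k σb).mul_const _)

lemma s4_bvec_diff (b0 : Fin n → ℝ) (b : Fin m → Fin n → ℝ) (i : Fin n) (σb : Fin m → ℝ) :
    DifferentiableAt ℝ (fun σ => bvec b0 b σ i) σb := by
  have e : (fun σ => bvec b0 b σ i) = fun σ : Fin m → ℝ => b0 i + ∑ k, σ k * b k i := by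
    funext σ
    simp [bvec, Finset.sum_apply]
  rw [e]
  exact (differentiableAt_const _).add
    (DifferentiableAt.fun_sum fun k _ => (s4_diff_apply k σb).mul_const _)

lemma s4_x_diff (A0 : Matrix (Fin n) (Fin n) ℝ) (A : Fin m → Matrix (Fin n) (Fin n) ℝ)
    (b0 : Fin n → ℝ) (b : Fin m → Fin n → ℝ) {σb : Fin m → ℝ}
    (hdet : IsUnit (Amat A0 A σb).det) :
    DifferentiableAt ℝ (fun σ => (Amat A0 A σ)⁻¹ *ᵥ bvec b0 b σ) σb := by
  have heq : (fun σ => (Amat A0 A σ)⁻¹ *ᵥ bvec b0 b σ)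
      = fun σ => fun i => ((Amat A0 A σ).det)⁻¹
          * ((Amat A0 A σ).updateCol i (bvec b0 b σ)).det := by
    funext σ i
    rw [Matrix.inv_def, Matrix.smul_mulVec, ← Matrix.cramer_eq_adjugate_mulVec]
    simp [Ring.inverse_eq_inv', Matrix.cramer_apply]
  rw [heq]
  rw [differentiableAt_pi]
  intro i
  have hdetdiff := s4_det_diff (Amat A0 A) (fun i j => s4_Amat_entry_diff A0 A i j σb)
  have hdet0 : (Amat A0 A σb).det ≠ 0 := hdet.ne_zero
  refine DifferentiableAt.mul (hdetdiff.inv hdet0) ?_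
  apply s4_det_diff
  intro i' j'
  have e : (fun σ => ((Amat A0 A σ).updateCol i (bvec b0 b σ)) i' j')
      = fun σ => if j' = i then bvec b0 b σ i' else Amat A0 A σ i' j' := by
    funext σ
    rw [Matrix.updateCol_apply]
  rw [e]
  by_cases hji : j' = i
  · simp only [hji, if_true]
    exact s4_bvec_diff b0 b i' σb
  · simp only [hji, if_false]
    exact s4_Amat_entry_diff A0 A i' j' σb

end


/-- Let `V` be of Legendre type and `(x̄,σ̄) ∈ ℝⁿ × int(dom V*)` a critical
point of `Ξ` (`A(σ̄)x̄ = b(σ̄)` and `q(x̄) = ∇V*(σ̄)`). Then `x̄ ∈ X₀`, `σ̄ ∈ S_col`, `x̄` is a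
critical point of `f`, `f(x̄) = Ξ(x̄,σ̄) = D(σ̄)`, and if `σ̄ ∈ S₀` then `σ̄` is a critical
point of `D`. -/
theorem statement4 {n m : ℕ}
    (A0 : Matrix (Fin n) (Fin n) ℝ) (A : Fin m → Matrix (Fin n) (Fin n) ℝ)
    (b0 : Fin n → ℝ) (b : Fin m → Fin n → ℝ) (c : Fin m → ℝ)
    (hA0 : A0.IsSymm) (hA : ∀ i, (A i).IsSymm)
    (V Vs : (Fin m → ℝ) → ℝ) (dV dVs : Set (Fin m → ℝ))
    (gV gVs : (Fin m → ℝ) → (Fin m → ℝ))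
    (hV : properLscConvex V dV) (hLeg : LegendreType V dV gV)
    (hconj : isConjugate V dV Vs dVs)
    (hgVs : ∀ σ ∈ interior dVs, HasFDerivAt Vs (dotCLM (gVs σ)) σ)
    (D : (Fin m → ℝ) → ℝ)
    (hD : ∀ σ ∈ dVs, bvec b0 b σ ∈ Set.range (Amat A0 A σ).mulVec →
      ∀ x, Amat A0 A σ *ᵥ x = bvec b0 b σ →
        D σ = qf A0 b0 0 x + qvec A b c x ⬝ᵥ σ - Vs σ)
    (xb : Fin n → ℝ) (σb : Fin m → ℝ) (hσint : σb ∈ interior dVs)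
    (hcrit1 : Amat A0 A σb *ᵥ xb = bvec b0 b σb)
    (hcrit2 : qvec A b c xb = gVs σb) :
    qvec A b c xb ∈ interior dV ∧
    σb ∈ dVs ∧ bvec b0 b σb ∈ Set.range (Amat A0 A σb).mulVec ∧
    HasFDerivAt (fun x => qf A0 b0 0 x + V (qvec A b c x))
      (0 : (Fin n → ℝ) →L[ℝ] ℝ) xb ∧
    qf A0 b0 0 xb + V (qvec A b c xb) =
      qf A0 b0 0 xb + qvec A b c xb ⬝ᵥ σb - Vs σb ∧
    qf A0 b0 0 xb + qvec A b c xb ⬝ᵥ σb - Vs σb = D σb ∧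
    (IsUnit (Amat A0 A σb).det → HasFDerivAt D (0 : (Fin m → ℝ) →L[ℝ] ℝ) σb) := by
  have hσb : σb ∈ dVs := interior_subset hσint
  have hφ : HasFDerivAt Vs (dotCLM (qvec A b c xb)) σb := by
    rw [hcrit2]; exact hgVs σb hσint
  have hfen := s4_fenchel hV hconj hσint hφ
  have hsub : σb ∈ subdiff V dV (qvec A b c xb) := by
    refine ⟨hfen.1, fun y' hy' => ?_⟩
    have h1 := s4_le_Vs hconj hσb hy'
    rw [sub_dotProduct]
    linarith [hfen.2]
  have hyint : qvec A b c xb ∈ interior dV := by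
    by_contra h
    have := hLeg.2.2.1 _ h
    rw [this] at hsub
    exact hsub
  have conj3 : bvec b0 b σb ∈ Set.range (Amat A0 A σb).mulVec := ⟨xb, hcrit1⟩
  -- critical point of f
  have conj4 : HasFDerivAt (fun x => qf A0 b0 0 x + V (qvec A b c x))
      (0 : (Fin n → ℝ) →L[ℝ] ℝ) xb := by
    have hgVy := hLeg.2.1 _ hyint
    have hgu : σb = gV (qvec A b c xb) := s4_grad_unique hyint hgVy hsub
    have hq := s4_hasFDerivAt_qvec A hA b c xb
    have hcomp := hgVy.comp xb hq
    have h0 := s4_hasFDerivAt_qf A0 hA0 b0 0 xb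
    have htot := h0.add hcomp
    have hzero : dotCLM (A0 *ᵥ xb - b0)
        + (dotCLM (gV (qvec A b c xb))).comp
          (ContinuousLinearMap.pi fun i => dotCLM (A i *ᵥ xb - b i))
        = (0 : (Fin n → ℝ) →L[ℝ] ℝ) := by
      ext v
      rw [← hgu]
      simp only [ContinuousLinearMap.add_apply, ContinuousLinearMap.coe_comp',
        Function.comp_apply, ContinuousLinearMap.pi_apply, s4_dotCLM_apply,
        ContinuousLinearMap.zero_apply]
      have e0 : (ContinuousLinearMap.pi fun i => dotCLM (A i *ᵥ xb - b i)) v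
          = fun i => (A i *ᵥ xb - b i) ⬝ᵥ v := rfl
      rw [e0]
      have e1 : (σb ⬝ᵥ fun i => (A i *ᵥ xb - b i) ⬝ᵥ v)
          = ∑ i, σb i * ((A i *ᵥ xb - b i) ⬝ᵥ v) := rfl
      rw [e1]
      exact s4_key A0 A b0 b hcrit1 v
    rw [hzero] at htot
    exact htot
  have conj5 : qf A0 b0 0 xb + V (qvec A b c xb)
      = qf A0 b0 0 xb + qvec A b c xb ⬝ᵥ σb - Vs σb := by
    rw [hfen.2]; ring
  have conj6 : qf A0 b0 0 xb + qvec A b c xb ⬝ᵥ σb - Vs σb = D σb :=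
    (hD σb hσb conj3 xb hcrit1).symm
  refine ⟨hyint, hσb, conj3, conj4, conj5, conj6, ?_⟩
  -- critical point of D
  intro hdet
  set x' : (Fin m → ℝ) → (Fin n → ℝ) := fun σ => (Amat A0 A σ)⁻¹ *ᵥ bvec b0 b σ with hx'
  have hx'σb : x' σb = xb := by
    rw [hx']
    simp only
    rw [← hcrit1, Matrix.mulVec_mulVec, Matrix.nonsing_inv_mul _ hdet, Matrix.one_mulVec]
  have hxdiff := s4_x_diff A0 A b0 b hdet
  obtain ⟨L, hL⟩ : ∃ L, HasFDerivAt x' L σb := ⟨_, hxdiff.hasFDerivAt⟩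
  have hLxb : HasFDerivAt x' L σb := hL
  -- derivative of each qf ∘ x'
  have hqfx : ∀ (M : Matrix (Fin n) (Fin n) ℝ) (hM : M.IsSymm) (bb : Fin n → ℝ) (cc : ℝ),
      HasFDerivAt (fun σ => qf M bb cc (x' σ)) ((dotCLM (M *ᵥ xb - bb)).comp L) σb := by
    intro M hM bb cc
    have houter : HasFDerivAt (qf M bb cc) (dotCLM (M *ᵥ xb - bb)) (x' σb) := by
      rw [hx'σb]; exact s4_hasFDerivAt_qf M hM bb cc xb
    exact houter.comp σb hL
  have h1 := hqfx A0 hA0 b0 0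
  have h2 : ∀ i : Fin m, HasFDerivAt (fun σ => qf (A i) (b i) (c i) (x' σ) * σ i)
      (qf (A i) (b i) (c i) xb • ContinuousLinearMap.proj (R := ℝ) (φ := fun _ : Fin m => ℝ) i
        + σb i • ((dotCLM (A i *ᵥ xb - b i)).comp L)) σb := by
    intro i
    have := (hqfx (A i) (hA i) (b i) (c i)).mul (hasFDerivAt_apply i σb)
    rw [hx'σb] at this
    exact this
  have h3 := hgVs σb hσint
  have hg : HasFDerivAt (fun σ => qf A0 b0 0 (x' σ)
      + (∑ i, qf (A i) (b i) (c i) (x' σ) * σ i) - Vs σ)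
      ((dotCLM (A0 *ᵥ xb - b0)).comp L
        + (∑ i, (qf (A i) (b i) (c i) xb
            • ContinuousLinearMap.proj (R := ℝ) (φ := fun _ : Fin m => ℝ) i
          + σb i • ((dotCLM (A i *ᵥ xb - b i)).comp L)))
        - dotCLM (gVs σb)) σb :=
    (h1.add (HasFDerivAt.fun_sum fun i _ => h2 i)).sub h3
  have hzero2 : (dotCLM (A0 *ᵥ xb - b0)).comp L
        + (∑ i, (qf (A i) (b i) (c i) xb
            • ContinuousLinearMap.proj (R := ℝ) (φ := fun _ : Fin m => ℝ) i
          + σb i • ((dotCLM (A i *ᵥ xb - b i)).comp L)))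
        - dotCLM (gVs σb) = (0 : (Fin m → ℝ) →L[ℝ] ℝ) := by
    ext w
    simp only [ContinuousLinearMap.sub_apply, ContinuousLinearMap.add_apply,
      ContinuousLinearMap.coe_comp', Function.comp_apply, ContinuousLinearMap.coe_sum',
      Finset.sum_apply, ContinuousLinearMap.smul_apply, ContinuousLinearMap.proj_apply,
      s4_dotCLM_apply, smul_eq_mul, ContinuousLinearMap.zero_apply]
    rw [Finset.sum_add_distrib]
    have hkey := s4_key A0 A b0 b hcrit1 (L w)
    have e2 : ∑ i, qf (A i) (b i) (c i) xb * w i = gVs σb ⬝ᵥ w := by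
      rw [← hcrit2]; rfl
    rw [e2]
    linarith [hkey]
  rw [hzero2] at hg
  -- D agrees with this function near σb
  have hdetcont : ContinuousAt (fun σ => (Amat A0 A σ).det) σb :=
    (s4_det_diff (Amat A0 A) (fun i j => s4_Amat_entry_diff A0 A i j σb)).continuousAt
  have hev1 : ∀ᶠ σ in nhds σb, σ ∈ interior dVs :=
    isOpen_interior.eventually_mem hσint
  have hev2 : ∀ᶠ σ in nhds σb, (Amat A0 A σ).det ≠ 0 :=
    hdetcont.eventually_ne hdet.ne_zero
  have heq : D =ᶠ[nhds σb] (fun σ => qf A0 b0 0 (x' σ)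
      + (∑ i, qf (A i) (b i) (c i) (x' σ) * σ i) - Vs σ) := by
    filter_upwards [hev1, hev2] with σ h1' h2'
    have hu : IsUnit (Amat A0 A σ).det := isUnit_iff_ne_zero.2 h2'
    have hsolve : Amat A0 A σ *ᵥ x' σ = bvec b0 b σ := by
      rw [hx']
      simp only
      rw [Matrix.mulVec_mulVec, Matrix.mul_nonsing_inv _ hu, Matrix.one_mulVec]
    have := hD σ (interior_subset h1') ⟨x' σ, hsolve⟩ (x' σ) hsolve
    rw [this]
    congr 1
  exact hg.congr_of_eventuallyEq heq
end
end
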